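/- arXiv:2308.04790 — 4 statements merged into one kernel-verified Lean document; each statement's English description precedes it below -/
import Mathlib

section
/- Let I ⊆ ℝ be an open interval and D₁ ⊆ ℝ^{n_x}, D₂ ⊆ ℝ^{n_y} open sets. Let f : I × D₁ × D₂ → ℝ^{n_x} be continuous and uniformly Lipschitz continuous in (x,y), and let g : I × D₁ × D₂ → ℝ^{n_y} be continuously differentiable with uniformly Lipschitz continuous derivative, such that the partial derivative ∂_y g(t,x,y) ∈ ℝ^{n_y × n_y} is invertible for every (t,x,y) ∈ I × D₁ × D₂. Then for every t₀ ∈ I and every (x₀,y₀) ∈ D₁ × D₂ with g(t₀,x₀,y₀) = 0 there exist an open interval Ĩ with t₀ ∈ Ĩ ⊆ I and C¹ functions x : Ĩ → D₁, y : Ĩ → D₂ with x(t₀) = x₀, y(t₀) = y₀ such that (x,y) is a solution of the semi-explicit DAE on Ĩ; moreover, any two such solutions agree on a neighborhood of t₀. -/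
open Set

private lemma implicit_aux (nx ny : ℕ) (I : Set ℝ) (hIopen : IsOpen I)
    (D₁ : Set (Fin nx → ℝ)) (hD₁ : IsOpen D₁) (D₂ : Set (Fin ny → ℝ)) (hD₂ : IsOpen D₂)
    (g : ℝ → (Fin nx → ℝ) → (Fin ny → ℝ) → (Fin ny → ℝ))
    (hg : ContDiffOn ℝ 1 (fun p : ℝ × (Fin nx → ℝ) × (Fin ny → ℝ) =>
      g p.1 p.2.1 p.2.2) (I ×ˢ D₁ ×ˢ D₂))
    (hinv : ∀ t ∈ I, ∀ x ∈ D₁, ∀ y ∈ D₂,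
      Function.Bijective ⇑(fderiv ℝ (fun y' => g t x y') y))
    (t₀ : ℝ) (ht₀ : t₀ ∈ I) (x₀ : Fin nx → ℝ) (hx₀ : x₀ ∈ D₁)
    (y₀ : Fin ny → ℝ) (hy₀ : y₀ ∈ D₂) (hcons : g t₀ x₀ y₀ = 0) :
    ∃ (S : Set (ℝ × (Fin nx → ℝ))) (h : ℝ × (Fin nx → ℝ) → (Fin ny → ℝ)) (K : NNReal)
      (U : Set (ℝ × (Fin nx → ℝ) × (Fin ny → ℝ))),
      IsOpen S ∧ (t₀, x₀) ∈ S ∧ ContDiffOn ℝ 1 h S ∧ LipschitzOnWith K h S ∧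
      h (t₀, x₀) = y₀ ∧
      (∀ p ∈ S, (p.1, p.2, h p) ∈ I ×ˢ D₁ ×ˢ D₂) ∧
      (∀ p ∈ S, g p.1 p.2 (h p) = 0) ∧
      IsOpen U ∧ (t₀, x₀, y₀) ∈ U ∧
      (∀ p ∈ U, g p.1 p.2.1 p.2.2 = 0 → (p.1, p.2.1) ∈ S ∧ p.2.2 = h (p.1, p.2.1)) := by
  classical
  set p₀ : ℝ × (Fin nx → ℝ) × (Fin ny → ℝ) := (t₀, x₀, y₀) with hp₀def
  have hopen : IsOpen (I ×ˢ D₁ ×ˢ D₂) := hIopen.prod (hD₁.prod hD₂)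
  have hp₀ : p₀ ∈ I ×ˢ D₁ ×ˢ D₂ := ⟨ht₀, ⟨hx₀, hy₀⟩⟩
  have hmem : I ×ˢ D₁ ×ˢ D₂ ∈ nhds p₀ := hopen.mem_nhds hp₀
  set gg : ℝ × (Fin nx → ℝ) × (Fin ny → ℝ) → (Fin ny → ℝ) :=
    fun p => g p.1 p.2.1 p.2.2 with hggdef
  have hgg : ContDiffAt ℝ 1 gg p₀ := hg.contDiffAt hmem
  set incl : (Fin ny → ℝ) →L[ℝ] ℝ × (Fin nx → ℝ) × (Fin ny → ℝ) :=
    (0 : (Fin ny → ℝ) →L[ℝ] ℝ).prod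
      ((0 : (Fin ny → ℝ) →L[ℝ] (Fin nx → ℝ)).prod (ContinuousLinearMap.id ℝ _)) with hincldef
  have hpart : ∀ t ∈ I, ∀ x ∈ D₁, ∀ y ∈ D₂,
      Function.Bijective ⇑((fderiv ℝ gg (t, x, y)).comp incl) := by
    intro t ht x hx y hy
    have hmem' : I ×ˢ D₁ ×ˢ D₂ ∈ nhds ((t, x, y) : ℝ × (Fin nx → ℝ) × (Fin ny → ℝ)) :=
      hopen.mem_nhds ⟨ht, hx, hy⟩
    have hdiff : DifferentiableAt ℝ gg (t, x, y) :=
      (hg.contDiffAt hmem').differentiableAt one_ne_zero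
    have hι : HasFDerivAt (fun y' : Fin ny → ℝ =>
        ((t, x, y') : ℝ × (Fin nx → ℝ) × (Fin ny → ℝ))) incl y :=
      (hasFDerivAt_const t y).prodMk ((hasFDerivAt_const x y).prodMk (hasFDerivAt_id y))
    have hcomp : HasFDerivAt (fun y' => g t x y') ((fderiv ℝ gg (t, x, y)).comp incl) y :=
      by have := HasFDerivAt.comp y hdiff.hasFDerivAt hι; exact this
    have := hinv t ht x hx y hy
    rwa [hcomp.fderiv] at this
  -- the derivative of the extended map `G`
  set g' := fderiv ℝ gg p₀ with hg'def
  set A : (ℝ × (Fin nx → ℝ) × (Fin ny → ℝ)) →L[ℝ] (ℝ × (Fin nx → ℝ) × (Fin ny → ℝ)) :=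
    (ContinuousLinearMap.fst ℝ ℝ _).prod
      (((ContinuousLinearMap.fst ℝ _ _).comp (ContinuousLinearMap.snd ℝ ℝ _)).prod g')
      with hAdef
  set G : (ℝ × (Fin nx → ℝ) × (Fin ny → ℝ)) → (ℝ × (Fin nx → ℝ) × (Fin ny → ℝ)) :=
    fun p => (p.1, p.2.1, gg p) with hGdef
  have hGc : ContDiffAt ℝ 1 G p₀ :=
    (contDiff_fst.contDiffAt).prodMk (((contDiff_fst.comp contDiff_snd).contDiffAt).prodMk hgg)
  have hA : HasFDerivAt G A p₀ :=
    hasFDerivAt_fst.prodMk ((hasFDerivAt_fst.comp p₀ hasFDerivAt_snd).prodMk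
      (hgg.differentiableAt one_ne_zero).hasFDerivAt)
  have hb := hpart t₀ ht₀ x₀ hx₀ y₀ hy₀
  have hAbij : Function.Bijective ⇑A := by
    constructor
    · intro v w hvw
      have h1' := congrArg (fun z : ℝ × (Fin nx → ℝ) × (Fin ny → ℝ) => z.1) hvw
      have h2' := congrArg (fun z : ℝ × (Fin nx → ℝ) × (Fin ny → ℝ) => z.2.1) hvw
      have h3' := congrArg (fun z : ℝ × (Fin nx → ℝ) × (Fin ny → ℝ) => z.2.2) hvw
      have h1 : v.1 = w.1 := h1'
      have h2 : v.2.1 = w.2.1 := h2'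
      have h3 : g' v = g' w := h3'
      have hvweq : incl (v.2.2 - w.2.2) = v - w := by
        refine Prod.ext ?_ (Prod.ext ?_ ?_)
        · simp [hincldef, h1]
        · simp [hincldef, h2]
        · rfl
      have hz : (g'.comp incl) (v.2.2 - w.2.2) = 0 := by
        rw [ContinuousLinearMap.comp_apply, hvweq, map_sub, h3, sub_self]
      have h4 : v.2.2 = w.2.2 := by
        have := hb.1 (a₁ := v.2.2 - w.2.2) (a₂ := 0) (by rw [map_zero]; exact hz)
        exact sub_eq_zero.mp this
      exact Prod.ext h1 (Prod.ext h2 h4)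
    · intro b
      obtain ⟨d, hd⟩ := hb.2 (b.2.2 - g' (b.1, b.2.1, 0))
      refine ⟨(b.1, b.2.1, d), ?_⟩
      have hsplit : ((b.1, b.2.1, d) : ℝ × (Fin nx → ℝ) × (Fin ny → ℝ))
          = (b.1, b.2.1, 0) + incl d := by
        refine Prod.ext ?_ (Prod.ext ?_ ?_)
        · simp [hincldef]
        · simp [hincldef]
        · simp [hincldef]
      refine Prod.ext rfl (Prod.ext rfl ?_)
      show g' (b.1, b.2.1, d) = b.2.2
      rw [hsplit, map_add]
      have : g' (incl d) = b.2.2 - g' (b.1, b.2.1, 0) := by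
        rw [← ContinuousLinearMap.comp_apply]
        exact hd
      rw [this]; abel
  have hfin : FiniteDimensional ℝ (ℝ × (Fin nx → ℝ) × (Fin ny → ℝ)) := by infer_instance
  set eqv : (ℝ × (Fin nx → ℝ) × (Fin ny → ℝ)) ≃L[ℝ] (ℝ × (Fin nx → ℝ) × (Fin ny → ℝ)) :=
    (LinearEquiv.ofBijective (A : (ℝ × (Fin nx → ℝ) × (Fin ny → ℝ)) →ₗ[ℝ] _) hAbij).toContinuousLinearEquiv with heqvdef
  have heqv : (eqv : (ℝ × (Fin nx → ℝ) × (Fin ny → ℝ)) →L[ℝ] _) = A := by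
    ext v <;> rfl
  have hA' : HasFDerivAt G ((eqv : _ →L[ℝ] _) :
      (ℝ × (Fin nx → ℝ) × (Fin ny → ℝ)) →L[ℝ] _) p₀ := by rw [heqv]; exact hA
  set Φ := hGc.toOpenPartialHomeomorph G hA' one_ne_zero with hΦdef
  have hΦcoe : ∀ p, Φ p = G p := fun p => rfl
  have hsrc : p₀ ∈ Φ.source := hGc.mem_toOpenPartialHomeomorph_source hA' one_ne_zero
  have hGp₀ : G p₀ = (t₀, x₀, 0) := by
    show ((t₀, x₀, g t₀ x₀ y₀) : ℝ × (Fin nx → ℝ) × (Fin ny → ℝ)) = (t₀, x₀, 0)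
    rw [hcons]
  set q₀ : ℝ × (Fin nx → ℝ) × (Fin ny → ℝ) := (t₀, x₀, (0 : Fin ny → ℝ)) with hq₀def
  have htgt : q₀ ∈ Φ.target := by
    have := hGc.image_mem_toOpenPartialHomeomorph_target hA' one_ne_zero
    rwa [hGp₀] at this
  have hψq₀ : Φ.symm q₀ = p₀ := by
    rw [← hGp₀]
    exact Φ.left_inv hsrc
  have hψc : ContDiffAt ℝ 1 (⇑Φ.symm) q₀ := by
    have := hGc.to_localInverse hA' one_ne_zero
    rw [hGp₀] at this
    exact this
  obtain ⟨u, hu_mem, hu⟩ := hψc.contDiffOn le_rfl (by simp)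
  obtain ⟨K, slip, hslip_mem, hKlip⟩ := hψc.exists_lipschitzOnWith
  set T : Set (ℝ × (Fin nx → ℝ) × (Fin ny → ℝ)) :=
    (Φ.target ∩ Φ.symm ⁻¹' (Φ.source ∩ (I ×ˢ D₁ ×ˢ D₂))) ∩ (interior u ∩ interior slip)
    with hTdef
  have hTopen : IsOpen T :=
    (Φ.isOpen_inter_preimage_symm (Φ.open_source.inter hopen)).inter
      (isOpen_interior.inter isOpen_interior)
  have hq₀T : q₀ ∈ T :=
    ⟨⟨htgt, by rw [mem_preimage, hψq₀]; exact ⟨hsrc, hp₀⟩⟩,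
      ⟨mem_interior_iff_mem_nhds.2 hu_mem, mem_interior_iff_mem_nhds.2 hslip_mem⟩⟩
  set S : Set (ℝ × (Fin nx → ℝ)) :=
    {p | ((p.1, p.2, (0 : Fin ny → ℝ)) : ℝ × (Fin nx → ℝ) × (Fin ny → ℝ)) ∈ T} with hSdef
  have hjcont : Continuous (fun p : ℝ × (Fin nx → ℝ) =>
      ((p.1, p.2, (0 : Fin ny → ℝ)) : ℝ × (Fin nx → ℝ) × (Fin ny → ℝ))) :=
    continuous_fst.prodMk (continuous_snd.prodMk continuous_const)
  have hSopen : IsOpen S := hTopen.preimage hjcont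
  have hS₀ : (t₀, x₀) ∈ S := hq₀T
  set h : ℝ × (Fin nx → ℝ) → (Fin ny → ℝ) := fun p => (Φ.symm (p.1, p.2, 0)).2.2 with hhdef
  have hkey : ∀ p : ℝ × (Fin nx → ℝ), p ∈ S →
      Φ.symm (p.1, p.2, 0) = (p.1, p.2, h p) ∧ (p.1, p.2, h p) ∈ I ×ˢ D₁ ×ˢ D₂ ∧
      (p.1, p.2, h p) ∈ Φ.source ∧ g p.1 p.2 (h p) = 0 := by
    intro p hp
    obtain ⟨⟨hpt, hpre⟩, -⟩ := hp
    have hri : G (Φ.symm (p.1, p.2, 0)) = (p.1, p.2, 0) := Φ.right_inv hpt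
    have h1' := congrArg (fun z : ℝ × (Fin nx → ℝ) × (Fin ny → ℝ) => z.1) hri
    have h2' := congrArg (fun z : ℝ × (Fin nx → ℝ) × (Fin ny → ℝ) => z.2.1) hri
    have h3' := congrArg (fun z : ℝ × (Fin nx → ℝ) × (Fin ny → ℝ) => z.2.2) hri
    have h1 : (Φ.symm (p.1, p.2, 0)).1 = p.1 := h1'
    have h2 : (Φ.symm (p.1, p.2, 0)).2.1 = p.2 := h2'
    have h3 : gg (Φ.symm (p.1, p.2, 0)) = 0 := h3'
    have heq : Φ.symm (p.1, p.2, 0) = (p.1, p.2, h p) := Prod.ext h1 (Prod.ext h2 rfl)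
    refine ⟨heq, ?_, ?_, ?_⟩
    · rw [← heq]; exact hpre.2
    · rw [← heq]; exact hpre.1
    · rw [heq] at h3; exact h3
  have hhcd : ContDiffOn ℝ 1 h S := by
    have hψu : ContDiffOn ℝ 1 (⇑Φ.symm) (interior u) := hu.mono interior_subset
    have hjcd : ContDiffOn ℝ 1 (fun p : ℝ × (Fin nx → ℝ) =>
        ((p.1, p.2, (0 : Fin ny → ℝ)) : ℝ × (Fin nx → ℝ) × (Fin ny → ℝ))) S :=
      (contDiff_fst.prodMk (contDiff_snd.prodMk contDiff_const)).contDiffOn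
    have hcomp : ContDiffOn ℝ 1 (fun p : ℝ × (Fin nx → ℝ) => Φ.symm (p.1, p.2, 0)) S :=
      ContDiffOn.comp hψu hjcd (fun p hp => hp.2.1)
    exact (contDiff_snd.comp contDiff_snd).comp_contDiffOn hcomp
  have hhlip : LipschitzOnWith K h S := by
    intro p hp q hq
    have hps : ((p.1, p.2, (0 : Fin ny → ℝ)) : ℝ × (Fin nx → ℝ) × (Fin ny → ℝ)) ∈ slip :=
      interior_subset hp.2.2
    have hqs : ((q.1, q.2, (0 : Fin ny → ℝ)) : ℝ × (Fin nx → ℝ) × (Fin ny → ℝ)) ∈ slip :=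
      interior_subset hq.2.2
    calc edist (h p) (h q)
        ≤ edist (Φ.symm (p.1, p.2, 0)) (Φ.symm (q.1, q.2, 0)) := by
          rw [Prod.edist_eq (Φ.symm (p.1, p.2, 0)) (Φ.symm (q.1, q.2, 0))]
          exact le_trans (le_max_right _ _) (le_max_right _ _)
      _ ≤ K * edist ((p.1, p.2, (0 : Fin ny → ℝ)) : ℝ × (Fin nx → ℝ) × (Fin ny → ℝ))
            (q.1, q.2, 0) := hKlip hps hqs
      _ = K * edist p q := by
          congr 1
          rw [Prod.edist_eq, Prod.edist_eq, Prod.edist_eq]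
          simp
  have hh₀ : h (t₀, x₀) = y₀ := by
    show (Φ.symm ((t₀ : ℝ), x₀, (0 : Fin ny → ℝ))).2.2 = y₀
    rw [show ((t₀ : ℝ), x₀, (0 : Fin ny → ℝ)) = q₀ from rfl, hψq₀]
  set U : Set (ℝ × (Fin nx → ℝ) × (Fin ny → ℝ)) :=
    Φ.source ∩ {p : ℝ × (Fin nx → ℝ) × (Fin ny → ℝ) | (p.1, p.2.1) ∈ S} with hUdef
  have hUopen : IsOpen U :=
    Φ.open_source.inter (hSopen.preimage (continuous_fst.prodMk
      (continuous_fst.comp continuous_snd)))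
  have hU₀ : (t₀, x₀, y₀) ∈ U := ⟨hsrc, hS₀⟩
  have hUuniq : ∀ p ∈ U, g p.1 p.2.1 p.2.2 = 0 → (p.1, p.2.1) ∈ S ∧ p.2.2 = h (p.1, p.2.1) := by
    intro p hp hzero
    have hpS : (p.1, p.2.1) ∈ S := hp.2
    obtain ⟨heqψ, hmem', hsrc', hzero'⟩ := hkey _ hpS
    have hGeq : G p = G (p.1, p.2.1, h (p.1, p.2.1)) := by
      refine Prod.ext rfl (Prod.ext rfl ?_)
      show gg p = gg (p.1, p.2.1, h (p.1, p.2.1))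
      show g p.1 p.2.1 p.2.2 = g p.1 p.2.1 (h (p.1, p.2.1))
      rw [hzero, hzero']
    have heqp := Φ.injOn hp.1 hsrc' hGeq
    have h5 := congrArg (fun z : ℝ × (Fin nx → ℝ) × (Fin ny → ℝ) => z.2.2) heqp
    exact ⟨hpS, h5⟩
  exact ⟨S, h, K, U, hSopen, hS₀, hhcd, hhlip, hh₀,
    fun p hp => (hkey p hp).2.1, fun p hp => (hkey p hp).2.2.2, hUopen, hU₀, hUuniq⟩


/-- **Existence and local uniqueness for index-1 semi-explicit DAEs.**
If `f` is continuous and uniformly Lipschitz in `(x,y)`, `g` is continuously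
differentiable with uniformly Lipschitz derivative, and the partial derivative
`∂_y g` is invertible everywhere on `I × D₁ × D₂`, then for every consistent
initial value `(t₀, x₀, y₀)` (i.e. `g t₀ x₀ y₀ = 0`) there is a locally unique
`C¹` solution of the semi-explicit DAE `x' = f(t,x,y)`, `0 = g(t,x,y)`. -/
theorem dae_index_one_existence_uniqueness (nx ny : ℕ)
    (I : Set ℝ) (hIopen : IsOpen I) (hIint : I.OrdConnected)
    (D₁ : Set (Fin nx → ℝ)) (hD₁ : IsOpen D₁)
    (D₂ : Set (Fin ny → ℝ)) (hD₂ : IsOpen D₂)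
    (f : ℝ → (Fin nx → ℝ) → (Fin ny → ℝ) → (Fin nx → ℝ))
    (g : ℝ → (Fin nx → ℝ) → (Fin ny → ℝ) → (Fin ny → ℝ))
    (hfcont : ContinuousOn (fun p : ℝ × (Fin nx → ℝ) × (Fin ny → ℝ) =>
      f p.1 p.2.1 p.2.2) (I ×ˢ D₁ ×ˢ D₂))
    (hfLip : ∃ L : NNReal, ∀ t ∈ I, LipschitzOnWith L
      (fun p : (Fin nx → ℝ) × (Fin ny → ℝ) => f t p.1 p.2) (D₁ ×ˢ D₂))
    (hg : ContDiffOn ℝ 1 (fun p : ℝ × (Fin nx → ℝ) × (Fin ny → ℝ) =>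
      g p.1 p.2.1 p.2.2) (I ×ˢ D₁ ×ˢ D₂))
    (hgLip : ∃ L : NNReal, LipschitzOnWith L
      (fun p : ℝ × (Fin nx → ℝ) × (Fin ny → ℝ) =>
        fderiv ℝ (fun q : ℝ × (Fin nx → ℝ) × (Fin ny → ℝ) => g q.1 q.2.1 q.2.2) p)
      (I ×ˢ D₁ ×ˢ D₂))
    (hinv : ∀ t ∈ I, ∀ x ∈ D₁, ∀ y ∈ D₂,
      Function.Bijective ⇑(fderiv ℝ (fun y' => g t x y') y))
    (t₀ : ℝ) (ht₀ : t₀ ∈ I)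
    (x₀ : Fin nx → ℝ) (hx₀ : x₀ ∈ D₁)
    (y₀ : Fin ny → ℝ) (hy₀ : y₀ ∈ D₂)
    (hcons : g t₀ x₀ y₀ = 0) :
    ∃ (J : Set ℝ) (x : ℝ → Fin nx → ℝ) (y : ℝ → Fin ny → ℝ),
      t₀ ∈ J ∧ J ⊆ I ∧ IsOpen J ∧ J.OrdConnected ∧
      ContDiffOn ℝ 1 x J ∧ ContDiffOn ℝ 1 y J ∧
      (∀ t ∈ J, x t ∈ D₁) ∧ (∀ t ∈ J, y t ∈ D₂) ∧
      (∀ t ∈ J, HasDerivAt x (f t (x t) (y t)) t) ∧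
      (∀ t ∈ J, g t (x t) (y t) = 0) ∧
      x t₀ = x₀ ∧ y t₀ = y₀ ∧
      (∀ (J' : Set ℝ) (x' : ℝ → Fin nx → ℝ) (y' : ℝ → Fin ny → ℝ),
        t₀ ∈ J' → J' ⊆ I → IsOpen J' → J'.OrdConnected →
        ContDiffOn ℝ 1 x' J' → ContDiffOn ℝ 1 y' J' →
        (∀ t ∈ J', x' t ∈ D₁) → (∀ t ∈ J', y' t ∈ D₂) →
        (∀ t ∈ J', HasDerivAt x' (f t (x' t) (y' t)) t) →
        (∀ t ∈ J', g t (x' t) (y' t) = 0) →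
        x' t₀ = x₀ → y' t₀ = y₀ →
        ∀ᶠ t in nhds t₀, x' t = x t ∧ y' t = y t) := by
  classical
  obtain ⟨Lf, hfLip⟩ := hfLip
  obtain ⟨S, h, K, U, hSopen, hS₀, hhcd, hhlip, hh₀, hhmem, hhzero, hUopen, hU₀, hUuniq⟩ :=
    implicit_aux nx ny I hIopen D₁ hD₁ D₂ hD₂ g hg hinv t₀ ht₀ x₀ hx₀ y₀ hy₀ hcons
  set v : ℝ → (Fin nx → ℝ) → (Fin nx → ℝ) := fun t x => f t x (h (t, x)) with hvdef
  have hvcont : ContinuousOn (fun p : ℝ × (Fin nx → ℝ) => v p.1 p.2) S := by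
    have hinner : ContinuousOn (fun p : ℝ × (Fin nx → ℝ) =>
        ((p.1, p.2, h p) : ℝ × (Fin nx → ℝ) × (Fin ny → ℝ))) S :=
      continuousOn_fst.prodMk (continuousOn_snd.prodMk hhcd.continuousOn)
    exact hfcont.comp hinner hhmem
  obtain ⟨r, hr0, hrS⟩ := (Metric.nhds_basis_closedBall.mem_iff).1 (hSopen.mem_nhds hS₀)
  have hcompact : IsCompact (Metric.closedBall ((t₀, x₀) : ℝ × (Fin nx → ℝ)) r) :=
    isCompact_closedBall _ _
  obtain ⟨C, hC⟩ := hcompact.exists_bound_of_continuousOn (hvcont.mono hrS)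
  set C' : ℝ := max C 1 with hC'def
  have hC'pos : (0 : ℝ) < C' := lt_of_lt_of_le one_pos (le_max_right _ _)
  set ε : ℝ := min r (r / C') with hεdef
  have hε0 : 0 < ε := lt_min hr0 (div_pos hr0 hC'pos)
  have hεr : ε ≤ r := min_le_left _ _
  have hmem2 : ∀ t ∈ Icc (t₀ - ε) (t₀ + ε), ∀ x ∈ Metric.closedBall x₀ r,
      ((t, x) : ℝ × (Fin nx → ℝ)) ∈ Metric.closedBall ((t₀, x₀) : ℝ × (Fin nx → ℝ)) r := by
    intro t ht x hx
    rw [Metric.mem_closedBall, Prod.dist_eq]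
    refine max_le ?_ ?_
    · rw [Real.dist_eq]
      have : |t - t₀| ≤ ε := abs_le.2 ⟨by linarith [ht.1], by linarith [ht.2]⟩
      linarith
    · exact hx
  set L : NNReal := Lf * max 1 K with hLdef
  have hvlip : ∀ t ∈ Icc (t₀ - ε) (t₀ + ε),
      LipschitzOnWith L (v t) (Metric.closedBall x₀ r) := by
    intro t ht
    rw [lipschitzOnWith_iff_dist_le_mul]
    intro x hx x' hx'
    have hxS : ((t, x) : ℝ × (Fin nx → ℝ)) ∈ S := hrS (hmem2 t ht x hx)
    have hx'S : ((t, x') : ℝ × (Fin nx → ℝ)) ∈ S := hrS (hmem2 t ht x' hx')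
    have hmemx := hhmem _ hxS
    have hmemx' := hhmem _ hx'S
    have htI : t ∈ I := hmemx.1
    have hd1 : ((x, h (t, x)) : (Fin nx → ℝ) × (Fin ny → ℝ)) ∈ D₁ ×ˢ D₂ :=
      ⟨hmemx.2.1, hmemx.2.2⟩
    have hd1' : ((x', h (t, x')) : (Fin nx → ℝ) × (Fin ny → ℝ)) ∈ D₁ ×ˢ D₂ :=
      ⟨hmemx'.2.1, hmemx'.2.2⟩
    have hlf := lipschitzOnWith_iff_dist_le_mul.1 (hfLip t htI) _ hd1 _ hd1'
    have hdh : dist (h (t, x)) (h (t, x')) ≤ (K : ℝ) * dist x x' := by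
      have h2 := lipschitzOnWith_iff_dist_le_mul.1 hhlip _ hxS _ hx'S
      have h3 : dist ((t, x) : ℝ × (Fin nx → ℝ)) (t, x') = dist x x' := by
        rw [Prod.dist_eq]
        simp [max_eq_right dist_nonneg]
      rw [h3] at h2
      exact h2
    calc dist (v t x) (v t x')
        ≤ (Lf : ℝ) * dist (((x, h (t, x))) : (Fin nx → ℝ) × (Fin ny → ℝ)) (x', h (t, x')) := hlf
      _ = (Lf : ℝ) * max (dist x x') (dist (h (t, x)) (h (t, x'))) := by rw [Prod.dist_eq]
      _ ≤ (Lf : ℝ) * ((max 1 K : NNReal) * dist x x') := by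
          refine mul_le_mul_of_nonneg_left (max_le ?_ ?_) Lf.2
          · calc dist x x' = 1 * dist x x' := (one_mul _).symm
              _ ≤ ((max 1 K : NNReal) : ℝ) * dist x x' := by
                  refine mul_le_mul_of_nonneg_right ?_ dist_nonneg
                  exact_mod_cast le_max_left 1 K
          · calc dist (h (t, x)) (h (t, x')) ≤ (K : ℝ) * dist x x' := hdh
              _ ≤ ((max 1 K : NNReal) : ℝ) * dist x x' := by
                  refine mul_le_mul_of_nonneg_right ?_ dist_nonneg
                  exact_mod_cast le_max_right 1 K
      _ = (L : ℝ) * dist x x' := by rw [hLdef]; push_cast; ring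
  have hpl : IsPicardLindelof (fun t x => v t x) (tmin := t₀ - ε) (tmax := t₀ + ε)
      ⟨t₀, ⟨by linarith, by linarith⟩⟩ x₀ ⟨r, hr0.le⟩ 0 ⟨C', hC'pos.le⟩ L :=
    { lipschitzOnWith := hvlip
      continuousOn := by
        intro x hx
        refine ContinuousOn.comp hvcont
          ((continuous_id.prodMk continuous_const).continuousOn) ?_
        intro t ht
        exact hrS (hmem2 t ht x hx)
      norm_le := by
        intro t ht x hx
        exact le_trans (hC _ (hmem2 t ht x hx)) (le_max_left _ _)
      mul_max_le := by
        have hmax : max (t₀ + ε - t₀) (t₀ - (t₀ - ε)) = ε := by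
          rw [add_sub_cancel_left, sub_sub_cancel, max_self]
        show C' * max (t₀ + ε - t₀) (t₀ - (t₀ - ε)) ≤ r - 0
        rw [hmax, sub_zero]
        calc C' * ε ≤ C' * (r / C') :=
              mul_le_mul_of_nonneg_left (min_le_right _ _) hC'pos.le
          _ = r := by field_simp }
  obtain ⟨xs, hxs0', hxs⟩ := hpl.exists_eq_forall_mem_Icc_hasDerivWithinAt₀
  have hxs0 : xs t₀ = x₀ := hxs0'
  have hIccnhds : Icc (t₀ - ε) (t₀ + ε) ∈ nhds t₀ := Icc_mem_nhds (by linarith) (by linarith)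
  have hxscont : ContinuousAt xs t₀ :=
    ((hxs t₀ ⟨by linarith, by linarith⟩).continuousWithinAt).continuousAt hIccnhds
  have hev : ∀ᶠ t in nhds t₀, xs t ∈ Metric.ball x₀ r := by
    refine hxscont.eventually_mem ?_
    rw [hxs0]
    exact Metric.ball_mem_nhds _ hr0
  obtain ⟨δ₁, hδ₁0, hδ₁⟩ := Metric.eventually_nhds_iff_ball.1 hev
  set δ : ℝ := min δ₁ ε with hδdef
  have hδ0 : 0 < δ := lt_min hδ₁0 hε0
  set J : Set ℝ := Ioo (t₀ - δ) (t₀ + δ) with hJdef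
  have ht₀J : t₀ ∈ J := ⟨by linarith, by linarith⟩
  have hmain : ∀ t ∈ J, xs t ∈ Metric.ball x₀ r ∧ ((t, xs t) : ℝ × (Fin nx → ℝ)) ∈ S ∧
      t ∈ Ioo (t₀ - ε) (t₀ + ε) := by
    intro t ht
    have hδ₁' : δ ≤ δ₁ := min_le_left _ _
    have hδε : δ ≤ ε := min_le_right _ _
    have h1 : t ∈ Metric.ball t₀ δ₁ := by
      rw [Metric.mem_ball, Real.dist_eq]
      have := ht.1; have := ht.2
      rw [abs_sub_lt_iff]; constructor <;> linarith
    have hxb := hδ₁ t h1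
    have htε : t ∈ Ioo (t₀ - ε) (t₀ + ε) := ⟨by linarith [ht.1], by linarith [ht.2]⟩
    have hcb : ((t, xs t) : ℝ × (Fin nx → ℝ)) ∈ Metric.closedBall ((t₀, x₀) : ℝ × (Fin nx → ℝ)) r :=
      hmem2 t (Ioo_subset_Icc_self htε) (xs t) (Metric.ball_subset_closedBall hxb)
    exact ⟨hxb, hrS hcb, htε⟩
  have hDeriv : ∀ t ∈ J, HasDerivAt xs (v t (xs t)) t := by
    intro t ht
    have htε := (hmain t ht).2.2
    exact (hxs t (Ioo_subset_Icc_self htε)).hasDerivAt (Icc_mem_nhds htε.1 htε.2)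
  set y : ℝ → (Fin ny → ℝ) := fun t => h (t, xs t) with hydef
  have hJI : J ⊆ I := fun t ht => (hhmem _ (hmain t ht).2.1).1
  have hxD : ∀ t ∈ J, xs t ∈ D₁ := fun t ht => (hhmem _ (hmain t ht).2.1).2.1
  have hyD : ∀ t ∈ J, y t ∈ D₂ := fun t ht => (hhmem _ (hmain t ht).2.1).2.2
  have hgz : ∀ t ∈ J, g t (xs t) (y t) = 0 := fun t ht => hhzero _ (hmain t ht).2.1
  have hxscontOn : ContinuousOn xs J := fun t ht =>
    (hDeriv t ht).continuousAt.continuousWithinAt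
  have hxscd : ContDiffOn ℝ 1 xs J := by
    rw [show (1 : WithTop ℕ∞) = 0 + 1 by norm_num,
      contDiffOn_succ_iff_deriv_of_isOpen isOpen_Ioo]
    refine ⟨fun t ht => (hDeriv t ht).differentiableAt.differentiableWithinAt, ?_, ?_⟩
    · intro h'; exact absurd h' (by simp)
    · rw [contDiffOn_zero]
      have heqon : EqOn (deriv xs) (fun t => v t (xs t)) J := fun t ht => (hDeriv t ht).deriv
      refine ContinuousOn.congr ?_ heqon
      exact hvcont.comp (continuousOn_id.prodMk hxscontOn) (fun t ht => (hmain t ht).2.1)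
  have hycd : ContDiffOn ℝ 1 y J :=
    hhcd.comp (contDiffOn_id.prodMk hxscd) (fun t ht => (hmain t ht).2.1)
  have hyt₀ : y t₀ = y₀ := by
    show h (t₀, xs t₀) = y₀
    rw [hxs0, hh₀]
  refine ⟨J, xs, y, ht₀J, hJI, isOpen_Ioo, Set.ordConnected_Ioo, hxscd, hycd, hxD, hyD,
    hDeriv, hgz, hxs0, hyt₀, ?_⟩
  intro J' x' y' ht₀J' hJ'I hJ'open hJ'ord hx'cd hy'cd hx'D hy'D hx'deriv hg'zero hx'0 hy'0
  have hx'cont : ContinuousAt x' t₀ :=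
    (hx'cd.continuousOn.continuousAt (hJ'open.mem_nhds ht₀J'))
  have hy'cont : ContinuousAt y' t₀ :=
    (hy'cd.continuousOn.continuousAt (hJ'open.mem_nhds ht₀J'))
  have hev1 : ∀ᶠ t in nhds t₀, t ∈ J' :=
    Filter.eventually_of_mem (hJ'open.mem_nhds ht₀J') (fun t ht => ht)
  have hev2 : ∀ᶠ t in nhds t₀, ((t, x' t, y' t) : ℝ × (Fin nx → ℝ) × (Fin ny → ℝ)) ∈ U := by
    have hcont : ContinuousAt (fun t : ℝ =>
        ((t, x' t, y' t) : ℝ × (Fin nx → ℝ) × (Fin ny → ℝ))) t₀ :=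
      continuousAt_id.prodMk (hx'cont.prodMk hy'cont)
    refine hcont.eventually_mem ?_
    refine hUopen.mem_nhds ?_
    show ((t₀, x' t₀, y' t₀) : ℝ × (Fin nx → ℝ) × (Fin ny → ℝ)) ∈ U
    rw [hx'0, hy'0]; exact hU₀
  have hev3 : ∀ᶠ t in nhds t₀, t ∈ J :=
    Filter.eventually_of_mem (isOpen_Ioo.mem_nhds ht₀J) (fun t ht => ht)
  have hev4 : ∀ᶠ t in nhds t₀, x' t ∈ Metric.ball x₀ r := by
    refine hx'cont.eventually_mem ?_
    rw [hx'0]; exact Metric.ball_mem_nhds _ hr0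
  have hev5 : ∀ᶠ t in nhds t₀, t ∈ Ioo (t₀ - ε) (t₀ + ε) :=
    Filter.eventually_of_mem (isOpen_Ioo.mem_nhds ⟨by linarith, by linarith⟩) (fun t ht => ht)
  have heq_y : ∀ᶠ t in nhds t₀, ((t, x' t) : ℝ × (Fin nx → ℝ)) ∈ S ∧ y' t = h (t, x' t) := by
    filter_upwards [hev1, hev2] with t h1 h2
    exact hUuniq _ h2 (hg'zero t h1)
  set sfun : ℝ → Set (Fin nx → ℝ) := fun t =>
    if t ∈ Ioo (t₀ - ε) (t₀ + ε) then Metric.ball x₀ r else ∅ with hsfundef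
  have hvlip' : ∀ t, LipschitzOnWith L (v t) (sfun t) := by
    intro t
    by_cases hcase : t ∈ Ioo (t₀ - ε) (t₀ + ε)
    · rw [hsfundef]; simp only [if_pos hcase]
      exact (hvlip t (Ioo_subset_Icc_self hcase)).mono Metric.ball_subset_closedBall
    · rw [hsfundef]; simp only [if_neg hcase]
      intro a ha; exact absurd ha (Set.notMem_empty _)
  have hx'ev : ∀ᶠ t in nhds t₀, HasDerivAt x' (v t (x' t)) t ∧ x' t ∈ sfun t := by
    filter_upwards [hev1, heq_y, hev4, hev5] with t h1 h2 h4 h5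
    constructor
    · have hd := hx'deriv t h1
      rw [h2.2] at hd
      exact hd
    · rw [hsfundef]; simp only [if_pos h5]; exact h4
  have hxsev : ∀ᶠ t in nhds t₀, HasDerivAt xs (v t (xs t)) t ∧ xs t ∈ sfun t := by
    filter_upwards [hev3] with t ht
    refine ⟨hDeriv t ht, ?_⟩
    rw [hsfundef]; simp only [if_pos (hmain t ht).2.2]
    exact (hmain t ht).1
  have huniq : x' =ᶠ[nhds t₀] xs :=
    ODE_solution_unique_of_eventually (.of_forall hvlip') hx'ev hxsev (by rw [hx'0, hxs0])
  filter_upwards [huniq, heq_y] with t h1 h2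
  refine ⟨h1, ?_⟩
  show y' t = h (t, xs t)
  rw [h2.2, h1]
end

section
/- Let I ⊆ ℝ be an open interval and D₁ ⊆ ℝ^{n_x}, D₂ ⊆ ℝ^{n_y} open sets, f : I × D₁ × D₂ → ℝ^{n_x} continuous and g : I × D₁ × D₂ → ℝ^{n_y} differentiable. Suppose x : Ĩ → D₁ and y : Ĩ → D₂ are C¹ functions on an open interval Ĩ ⊆ I satisfying the reduced problem, i.e. x'(t) = f(t,x(t),y(t)) and 0 = ∂_t g(t,x(t),y(t)) + ∂_x g(t,x(t),y(t)) f(t,x(t),y(t)) + ∂_y g(t,x(t),y(t)) y'(t) for all t ∈ Ĩ, and suppose g(t₀,x(t₀),y(t₀)) = 0 for some t₀ ∈ Ĩ. Then g(t,x(t),y(t)) = 0 for all t ∈ Ĩ, so (x,y) is a solution of the original semi-explicit DAE on Ĩ. -/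
open Set

/-- If `(x,y)` solves the reduced problem
`x' = f(t,x,y)`, `0 = ∂_t g + ∂_x g · f + ∂_y g · y'` on an open interval `J`,
and the original constraint `g(t₀, x(t₀), y(t₀)) = 0` holds at some `t₀ ∈ J`,
then `g(t, x(t), y(t)) = 0` on all of `J`, i.e. `(x,y)` solves the original
semi-explicit DAE. -/
theorem reduced_solution_is_dae_solution (nx ny : ℕ)
    (I : Set ℝ) (hIopen : IsOpen I) (hIint : I.OrdConnected)
    (D₁ : Set (Fin nx → ℝ)) (hD₁ : IsOpen D₁)
    (D₂ : Set (Fin ny → ℝ)) (hD₂ : IsOpen D₂)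
    (f : ℝ → (Fin nx → ℝ) → (Fin ny → ℝ) → (Fin nx → ℝ))
    (g : ℝ → (Fin nx → ℝ) → (Fin ny → ℝ) → (Fin ny → ℝ))
    (hfcont : ContinuousOn (fun p : ℝ × (Fin nx → ℝ) × (Fin ny → ℝ) =>
      f p.1 p.2.1 p.2.2) (I ×ˢ D₁ ×ˢ D₂))
    (hgdiff : DifferentiableOn ℝ (fun p : ℝ × (Fin nx → ℝ) × (Fin ny → ℝ) =>
      g p.1 p.2.1 p.2.2) (I ×ˢ D₁ ×ˢ D₂))
    (J : Set ℝ) (hJI : J ⊆ I) (hJopen : IsOpen J) (hJint : J.OrdConnected)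
    (x : ℝ → Fin nx → ℝ) (y : ℝ → Fin ny → ℝ)
    (hx : ContDiffOn ℝ 1 x J) (hy : ContDiffOn ℝ 1 y J)
    (hxD : ∀ t ∈ J, x t ∈ D₁) (hyD : ∀ t ∈ J, y t ∈ D₂)
    (hode : ∀ t ∈ J, HasDerivAt x (f t (x t) (y t)) t)
    (hred : ∀ t ∈ J,
      deriv (fun s => g s (x t) (y t)) t
        + fderiv ℝ (fun x' => g t x' (y t)) (x t) (f t (x t) (y t))
        + fderiv ℝ (fun y' => g t (x t) y') (y t) (deriv y t) = 0)
    (t₀ : ℝ) (ht₀ : t₀ ∈ J) (hcons : g t₀ (x t₀) (y t₀) = 0) :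
    ∀ t ∈ J, g t (x t) (y t) = 0 := by
  have hU : IsOpen (I ×ˢ D₁ ×ˢ D₂) := hIopen.prod (hD₁.prod hD₂)
  have key : ∀ t ∈ J, HasDerivAt (fun s => g s (x s) (y s)) 0 t := by
    intro t ht
    have hp : ((t, x t, y t) : ℝ × (Fin nx → ℝ) × (Fin ny → ℝ)) ∈ I ×ˢ D₁ ×ˢ D₂ :=
      ⟨hJI ht, hxD t ht, hyD t ht⟩
    have hGd : DifferentiableAt ℝ (fun p : ℝ × (Fin nx → ℝ) × (Fin ny → ℝ) =>
        g p.1 p.2.1 p.2.2) (t, x t, y t) :=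
      hgdiff.differentiableAt (hU.mem_nhds hp)
    set L := fderiv ℝ (fun p : ℝ × (Fin nx → ℝ) × (Fin ny → ℝ) =>
        g p.1 p.2.1 p.2.2) (t, x t, y t) with hLdef
    have hL : HasFDerivAt (fun p : ℝ × (Fin nx → ℝ) × (Fin ny → ℝ) =>
        g p.1 p.2.1 p.2.2) L (t, x t, y t) := hGd.hasFDerivAt
    have hy' : HasDerivAt y (deriv y t) t := by
      have : DifferentiableAt ℝ y t :=
        ((hy.differentiableOn one_ne_zero) t ht).differentiableAt (hJopen.mem_nhds ht)
      exact this.hasDerivAt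
    have hcurve : HasDerivAt (fun s => ((s, x s, y s) : ℝ × (Fin nx → ℝ) × (Fin ny → ℝ)))
        (1, f t (x t) (y t), deriv y t) t :=
      (hasDerivAt_id t).prodMk ((hode t ht).prodMk hy')
    have hcomp : HasDerivAt (fun s => g s (x s) (y s))
        (L (1, f t (x t) (y t), deriv y t)) t := by
        have := hL.comp_hasDerivAt t hcurve; exact this
    -- partial in t
    have h1 : HasDerivAt (fun s => g s (x t) (y t)) (L (1, 0, 0)) t :=
      by have := hL.comp_hasDerivAt t
            ((hasDerivAt_id t).prodMk ((hasDerivAt_const t (x t)).prodMk (hasDerivAt_const t (y t))))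
         exact this
    -- partial in x
    have h2 : HasFDerivAt (fun x' => g t x' (y t))
        (L.comp (((0 : (Fin nx → ℝ) →L[ℝ] ℝ)).prod
          ((ContinuousLinearMap.id ℝ (Fin nx → ℝ)).prod 0))) (x t) :=
      by have hf : HasFDerivAt (fun x' => ((t, x', y t) : ℝ × (Fin nx → ℝ) × (Fin ny → ℝ)))
              (((0 : (Fin nx → ℝ) →L[ℝ] ℝ)).prod
                ((ContinuousLinearMap.id ℝ (Fin nx → ℝ)).prod 0)) (x t) :=
            ((hasFDerivAt_const t (x t)).prodMk ((hasFDerivAt_id (x t)).prodMk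
              (hasFDerivAt_const (y t) (x t))))
         have := hL.comp (x t) hf
         exact this
    -- partial in y
    have h3 : HasFDerivAt (fun y' => g t (x t) y')
        (L.comp (((0 : (Fin ny → ℝ) →L[ℝ] ℝ)).prod
          (((0 : (Fin ny → ℝ) →L[ℝ] (Fin nx → ℝ))).prod (ContinuousLinearMap.id ℝ _)))) (y t) :=
      by have hf : HasFDerivAt (fun y' => ((t, x t, y') : ℝ × (Fin nx → ℝ) × (Fin ny → ℝ)))
              (((0 : (Fin ny → ℝ) →L[ℝ] ℝ)).prod
                (((0 : (Fin ny → ℝ) →L[ℝ] (Fin nx → ℝ))).prod (ContinuousLinearMap.id ℝ _))) (y t) :=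
            ((hasFDerivAt_const t (y t)).prodMk ((hasFDerivAt_const (x t) (y t)).prodMk
              (hasFDerivAt_id (y t))))
         have := hL.comp (y t) hf
         exact this
    have hr := hred t ht
    rw [h1.deriv, h2.fderiv, h3.fderiv] at hr
    simp only [ContinuousLinearMap.comp_apply, ContinuousLinearMap.prod_apply,
      ContinuousLinearMap.zero_apply, ContinuousLinearMap.id_apply] at hr
    have hsum : L (1, f t (x t) (y t), deriv y t)
        = L (1, 0, 0) + L (0, f t (x t) (y t), 0) + L (0, 0, deriv y t) := by
      rw [← map_add, ← map_add]
      norm_num [Prod.ext_iff]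
    rw [hsum, hr] at hcomp
    exact hcomp
  -- h is constant on J
  have hconv : Convex ℝ J := convex_iff_ordConnected.mpr hJint
  intro t ht
  have : g t (x t) (y t) = g t₀ (x t₀) (y t₀) := by
    apply hconv.is_const_of_fderivWithin_eq_zero
      (fun s hs => ((key s hs).differentiableAt.differentiableWithinAt)) _ ht ht₀
    intro s hs
    have := ((key s hs).hasFDerivAt).fderiv
    rw [fderivWithin_eq_fderiv (hJopen.uniqueDiffOn s hs)
      (key s hs).differentiableAt, this]
    ext v
    simp
  rw [this, hcons]
end

section
/- Let I ⊆ ℝ be an open interval and D₁ ⊆ ℝ^{n_x}, D₂ ⊆ ℝ^{n_y} open sets, f : I × D₁ × D₂ → ℝ^{n_x} continuous and g : I × D₁ × D₂ → ℝ^{n_y} differentiable. Let (x,y) be a solution of the semi-explicit DAE on an open interval Ĩ ⊆ I, and suppose the partial derivative ∂_y g(t,x(t),y(t)) ∈ ℝ^{n_y × n_y} is invertible for every t ∈ Ĩ. Then y satisfies the explicit ODE y'(t) = − ∂_y g(t,x(t),y(t))⁻¹ ( ∂_t g(t,x(t),y(t)) + ∂_x g(t,x(t),y(t)) f(t,x(t),y(t))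 ) for every t ∈ Ĩ. -/
open Set

/-- Along a solution of the semi-explicit DAE with invertible `∂_y g`, the
algebraic variable `y` satisfies the explicit (underlying) ODE
`y' = −(∂_y g)⁻¹ (∂_t g + ∂_x g · f)`. -/
theorem dae_index_one_underlying_ode (nx ny : ℕ)
    (I : Set ℝ) (hIopen : IsOpen I) (hIint : I.OrdConnected)
    (D₁ : Set (Fin nx → ℝ)) (hD₁ : IsOpen D₁)
    (D₂ : Set (Fin ny → ℝ)) (hD₂ : IsOpen D₂)
    (f : ℝ → (Fin nx → ℝ) → (Fin ny → ℝ) → (Fin nx → ℝ))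
    (g : ℝ → (Fin nx → ℝ) → (Fin ny → ℝ) → (Fin ny → ℝ))
    (hfcont : ContinuousOn (fun p : ℝ × (Fin nx → ℝ) × (Fin ny → ℝ) =>
      f p.1 p.2.1 p.2.2) (I ×ˢ D₁ ×ˢ D₂))
    (hgdiff : DifferentiableOn ℝ (fun p : ℝ × (Fin nx → ℝ) × (Fin ny → ℝ) =>
      g p.1 p.2.1 p.2.2) (I ×ˢ D₁ ×ˢ D₂))
    (J : Set ℝ) (hJI : J ⊆ I) (hJopen : IsOpen J) (hJint : J.OrdConnected)
    (x : ℝ → Fin nx → ℝ) (y : ℝ → Fin ny → ℝ)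
    (hx : ContDiffOn ℝ 1 x J) (hy : ContDiffOn ℝ 1 y J)
    (hxD : ∀ t ∈ J, x t ∈ D₁) (hyD : ∀ t ∈ J, y t ∈ D₂)
    (hode : ∀ t ∈ J, HasDerivAt x (f t (x t) (y t)) t)
    (halg : ∀ t ∈ J, g t (x t) (y t) = 0)
    (hinv : ∀ t ∈ J, IsUnit (fderiv ℝ (fun y' => g t (x t) y') (y t))) :
    ∀ t ∈ J,
      deriv y t =
        -(Ring.inverse (fderiv ℝ (fun y' => g t (x t) y') (y t))
          (deriv (fun s => g s (x t) (y t)) t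
            + fderiv ℝ (fun x' => g t x' (y t)) (x t) (f t (x t) (y t)))) := by
  intro t ht
  have hU : IsOpen (I ×ˢ D₁ ×ˢ D₂) := hIopen.prod (hD₁.prod hD₂)
  have hP : ((t, x t, y t) : ℝ × (Fin nx → ℝ) × (Fin ny → ℝ)) ∈ I ×ˢ D₁ ×ˢ D₂ :=
    ⟨hJI ht, hxD t ht, hyD t ht⟩
  have hG : DifferentiableAt ℝ
      (fun p : ℝ × (Fin nx → ℝ) × (Fin ny → ℝ) => g p.1 p.2.1 p.2.2) (t, x t, y t) :=
    hgdiff.differentiableAt (hU.mem_nhds hP)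
  set L := fderiv ℝ (fun p : ℝ × (Fin nx → ℝ) × (Fin ny → ℝ) => g p.1 p.2.1 p.2.2)
      (t, x t, y t) with hLdef
  have hL : HasFDerivAt (fun p : ℝ × (Fin nx → ℝ) × (Fin ny → ℝ) => g p.1 p.2.1 p.2.2)
      L (t, x t, y t) := hG.hasFDerivAt
  have hy' : HasDerivAt y (deriv y t) t :=
    (((hy.differentiableOn one_ne_zero).differentiableAt (hJopen.mem_nhds ht))).hasDerivAt
  -- y partial
  have hAy : HasFDerivAt (fun w : Fin ny → ℝ => ((t : ℝ), x t, w))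
      ((0 : (Fin ny → ℝ) →L[ℝ] ℝ).prod
        ((0 : (Fin ny → ℝ) →L[ℝ] (Fin nx → ℝ)).prod (ContinuousLinearMap.id ℝ _))) (y t) :=
    HasFDerivAt.prodMk (hasFDerivAt_const t _) (HasFDerivAt.prodMk (hasFDerivAt_const (x t) _) (hasFDerivAt_id _))
  have hPy : HasFDerivAt (fun y' => g t (x t) y')
      (L.comp ((0 : (Fin ny → ℝ) →L[ℝ] ℝ).prod
        ((0 : (Fin ny → ℝ) →L[ℝ] (Fin nx → ℝ)).prod (ContinuousLinearMap.id ℝ _)))) (y t) :=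
    HasFDerivAt.comp (𝕜 := ℝ) (g := fun p : ℝ × (Fin nx → ℝ) × (Fin ny → ℝ) => g p.1 p.2.1 p.2.2)
      (f := fun w : Fin ny → ℝ => ((t : ℝ), x t, w)) (y t) hL hAy
  -- x partial
  have hAx : HasFDerivAt (fun w : Fin nx → ℝ => ((t : ℝ), w, y t))
      ((0 : (Fin nx → ℝ) →L[ℝ] ℝ).prod
        ((ContinuousLinearMap.id ℝ _).prod (0 : (Fin nx → ℝ) →L[ℝ] (Fin ny → ℝ)))) (x t) :=
    HasFDerivAt.prodMk (hasFDerivAt_const t _) (HasFDerivAt.prodMk (hasFDerivAt_id _) (hasFDerivAt_const (y t) _))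
  have hPx : HasFDerivAt (fun x' => g t x' (y t))
      (L.comp ((0 : (Fin nx → ℝ) →L[ℝ] ℝ).prod
        ((ContinuousLinearMap.id ℝ _).prod (0 : (Fin nx → ℝ) →L[ℝ] (Fin ny → ℝ))))) (x t) :=
    HasFDerivAt.comp (𝕜 := ℝ) (g := fun p : ℝ × (Fin nx → ℝ) × (Fin ny → ℝ) => g p.1 p.2.1 p.2.2)
      (f := fun w : Fin nx → ℝ => ((t : ℝ), w, y t)) (x t) hL hAx
  -- t partial
  have hAt : HasDerivAt (fun s : ℝ => (s, x t, y t))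
      ((1 : ℝ), (0 : Fin nx → ℝ), (0 : Fin ny → ℝ)) t :=
    HasDerivAt.prodMk (hasDerivAt_id t) (HasDerivAt.prodMk (hasDerivAt_const t _) (hasDerivAt_const t _))
  have hPt : HasDerivAt (fun s => g s (x t) (y t)) (L (1, 0, 0)) t :=
    HasFDerivAt.comp_hasDerivAt (l := fun p : ℝ × (Fin nx → ℝ) × (Fin ny → ℝ) => g p.1 p.2.1 p.2.2) t hL hAt
  -- curve
  have hc : HasDerivAt (fun s : ℝ => (s, x s, y s))
      ((1 : ℝ), f t (x t) (y t), deriv y t) t :=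
    HasDerivAt.prodMk (hasDerivAt_id t) (HasDerivAt.prodMk (hode t ht) hy')
  have hchain : HasDerivAt (fun s => g s (x s) (y s))
      (L (1, f t (x t) (y t), deriv y t)) t := HasFDerivAt.comp_hasDerivAt (l := fun p : ℝ × (Fin nx → ℝ) × (Fin ny → ℝ) => g p.1 p.2.1 p.2.2) t hL hc
  have hzero : HasDerivAt (fun s => g s (x s) (y s)) 0 t := by
    have hev : (fun s => g s (x s) (y s)) =ᶠ[nhds t] fun _ => (0 : Fin ny → ℝ) :=
      Filter.eventually_of_mem (hJopen.mem_nhds ht) halg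
    exact (hasDerivAt_const t 0).congr_of_eventuallyEq hev
  have heq : L (1, f t (x t) (y t), deriv y t) = 0 := hchain.unique hzero
  have hsplit : L ((1 : ℝ), f t (x t) (y t), deriv y t)
      = L (1, 0, 0) + L (0, f t (x t) (y t), 0) + L (0, 0, deriv y t) := by
    rw [← map_add, ← map_add]
    congr 1
    simp [Prod.ext_iff]
  have hyu : IsUnit (fderiv ℝ (fun y' => g t (x t) y') (y t)) := hinv t ht
  rw [hPy.fderiv] at hyu ⊢
  rw [hPt.deriv, hPx.fderiv]
  have hAyapp : ∀ v : Fin ny → ℝ, (L.comp ((0 : (Fin ny → ℝ) →L[ℝ] ℝ).prod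
        ((0 : (Fin ny → ℝ) →L[ℝ] (Fin nx → ℝ)).prod (ContinuousLinearMap.id ℝ _)))) v
      = L (0, 0, v) := fun v => rfl
  have hAxapp : (L.comp ((0 : (Fin nx → ℝ) →L[ℝ] ℝ).prod
        ((ContinuousLinearMap.id ℝ _).prod (0 : (Fin nx → ℝ) →L[ℝ] (Fin ny → ℝ)))))
        (f t (x t) (y t)) = L (0, f t (x t) (y t), 0) := rfl
  rw [hAxapp]
  set Ay := L.comp ((0 : (Fin ny → ℝ) →L[ℝ] ℝ).prod
        ((0 : (Fin ny → ℝ) →L[ℝ] (Fin nx → ℝ)).prod (ContinuousLinearMap.id ℝ _))) with hAydef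
  have key : Ay (deriv y t) = -(L (1, 0, 0) + L (0, f t (x t) (y t), 0)) := by
    rw [hAyapp]
    have := heq
    rw [hsplit] at this
    linear_combination (norm := abel) this
  have hcancel : Ring.inverse Ay (Ay (deriv y t)) = deriv y t := by
    have h1 : Ring.inverse Ay * Ay = 1 := Ring.inverse_mul_cancel Ay hyu
    calc Ring.inverse Ay (Ay (deriv y t)) = (Ring.inverse Ay * Ay) (deriv y t) := rfl
      _ = deriv y t := by rw [h1]; rfl
  rw [← hcancel, key, map_neg]
end

section
/- Let I ⊆ ℝ be an open interval and D₁ ⊆ ℝ^{n_x}, D₂ ⊆ ℝ^{n_y} open sets. Let f : I × D₁ × D₂ → ℝ^{n_x} be continuously differentiable and uniformly Lipschitz continuous in (x,y), and let g : I × D₁ × D₂ → ℝ^{n_y} be twice continuously differentiable. Assume there is a linear subspace K ⊆ ℝ^{n_y} with ker ∂_y g(t,x,y) = K for all (t,x,y) ∈ I × D₁ × D₂, let Q : ℝ^{n_y} → ℝ^{n_y} be a linear projection with range Q = K and set P = Id − Q. Define h(t,x,y) = ∂_t g(t,x,y) + ∂_x g(t,x,y) f(t,x,y) and g̃(t,x,u,v)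 = h(t,x,u+Qv) + ∂_y g(t,x,u+Qv) v. Let t₀ ∈ I and (x₀,y₀) ∈ D₁ × D₂ satisfy g(t₀,x₀,y₀) = 0, and suppose there exists w₀ ∈ ℝ^{n_y} with h(t₀,x₀,y₀) + ∂_y g(t₀,x₀,y₀) w₀ = 0. Set u₀ = P y₀, v₀ = P w₀ + Q y₀, and assume the partial derivative ∂_v g̃(t₀,x₀,u₀,v₀) ∈ ℝ^{n_y × n_y} is invertible. Then there exist an open interval Ĩ with t₀ ∈ Ĩ ⊆ I and C¹ functions x : Ĩ → D₁, y : Ĩ → D₂ with x(t₀) = x₀, y(t₀) = y₀ which form a solution of the semi-explicit DAE on Ĩ, and this solution is locally unique. -/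
set_option maxHeartbeats 1000000

open Set

/-- The auxiliary function `h(t,x,y) = ∂_t g(t,x,y) + ∂_x g(t,x,y) f(t,x,y)`. -/
noncomputable def hAux {nx ny : ℕ}
    (f : ℝ → (Fin nx → ℝ) → (Fin ny → ℝ) → (Fin nx → ℝ))
    (g : ℝ → (Fin nx → ℝ) → (Fin ny → ℝ) → (Fin ny → ℝ))
    (t : ℝ) (x : Fin nx → ℝ) (y : Fin ny → ℝ) : Fin ny → ℝ :=
  deriv (fun s => g s x y) t + fderiv ℝ (fun x' => g t x' y) x (f t x y)

/-- The reduced function `g̃(t,x,u,v) = h(t,x,u+Qv) + ∂_y g(t,x,u+Qv) v`. -/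
noncomputable def gTilde {nx ny : ℕ}
    (f : ℝ → (Fin nx → ℝ) → (Fin ny → ℝ) → (Fin nx → ℝ))
    (g : ℝ → (Fin nx → ℝ) → (Fin ny → ℝ) → (Fin ny → ℝ))
    (Q : (Fin ny → ℝ) →L[ℝ] (Fin ny → ℝ))
    (t : ℝ) (x : Fin nx → ℝ) (u v : Fin ny → ℝ) : Fin ny → ℝ :=
  hAux f g t x (u + Q v) + fderiv ℝ (fun y' => g t x y') (u + Q v) v

section AuxLemmas

variable {nx ny : ℕ}

private lemma curve_hasDerivAt (x : Fin nx → ℝ) (y : Fin ny → ℝ) (t : ℝ) :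
    HasDerivAt (fun s : ℝ => (s, x, y)) ((1 : ℝ), (0 : Fin nx → ℝ), (0 : Fin ny → ℝ)) t := by
  exact (hasDerivAt_id t).prodMk ((hasDerivAt_const t x).prodMk (hasDerivAt_const t y))

private lemma deriv_t_eq (g : ℝ → (Fin nx → ℝ) → (Fin ny → ℝ) → (Fin ny → ℝ))
    {t : ℝ} {x : Fin nx → ℝ} {y : Fin ny → ℝ}
    (hd : DifferentiableAt ℝ
      (fun p : ℝ × (Fin nx → ℝ) × (Fin ny → ℝ) => g p.1 p.2.1 p.2.2) (t, x, y)) :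
    deriv (fun s => g s x y) t
      = fderiv ℝ (fun p : ℝ × (Fin nx → ℝ) × (Fin ny → ℝ) => g p.1 p.2.1 p.2.2) (t, x, y)
          (1, 0, 0) := by
  have h := hd.hasFDerivAt.comp_hasDerivAt t (curve_hasDerivAt x y t)
  exact h.deriv

private lemma fderiv_x_eq (g : ℝ → (Fin nx → ℝ) → (Fin ny → ℝ) → (Fin ny → ℝ))
    {t : ℝ} {x : Fin nx → ℝ} {y : Fin ny → ℝ}
    (hd : DifferentiableAt ℝ
      (fun p : ℝ × (Fin nx → ℝ) × (Fin ny → ℝ) => g p.1 p.2.1 p.2.2) (t, x, y))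
    (w : Fin nx → ℝ) :
    fderiv ℝ (fun x' => g t x' y) x w
      = fderiv ℝ (fun p : ℝ × (Fin nx → ℝ) × (Fin ny → ℝ) => g p.1 p.2.1 p.2.2) (t, x, y)
          (0, w, 0) := by
  have hγ : HasFDerivAt (fun x' : Fin nx → ℝ => ((t : ℝ), x', y))
      (((0 : (Fin nx → ℝ) →L[ℝ] ℝ)).prod
        ((ContinuousLinearMap.id ℝ (Fin nx → ℝ)).prod (0 : (Fin nx → ℝ) →L[ℝ] (Fin ny → ℝ)))) x :=
    (hasFDerivAt_const t x).prodMk ((hasFDerivAt_id x).prodMk (hasFDerivAt_const y x))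
  have h := (hd.hasFDerivAt.comp x hγ).fderiv
  have : fderiv ℝ (fun x' => g t x' y) x = _ := h
  rw [this]
  simp

private lemma fderiv_y_eq (g : ℝ → (Fin nx → ℝ) → (Fin ny → ℝ) → (Fin ny → ℝ))
    {t : ℝ} {x : Fin nx → ℝ} {y : Fin ny → ℝ}
    (hd : DifferentiableAt ℝ
      (fun p : ℝ × (Fin nx → ℝ) × (Fin ny → ℝ) => g p.1 p.2.1 p.2.2) (t, x, y))
    (v : Fin ny → ℝ) :
    fderiv ℝ (fun y' => g t x y') y v
      = fderiv ℝ (fun p : ℝ × (Fin nx → ℝ) × (Fin ny → ℝ) => g p.1 p.2.1 p.2.2) (t, x, y)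
          (0, 0, v) := by
  have hγ : HasFDerivAt (fun y' : Fin ny → ℝ => ((t : ℝ), x, y'))
      (((0 : (Fin ny → ℝ) →L[ℝ] ℝ)).prod
        ((0 : (Fin ny → ℝ) →L[ℝ] (Fin nx → ℝ)).prod (ContinuousLinearMap.id ℝ (Fin ny → ℝ)))) y :=
    (hasFDerivAt_const t y).prodMk ((hasFDerivAt_const x y).prodMk (hasFDerivAt_id y))
  have h := (hd.hasFDerivAt.comp y hγ).fderiv
  have : fderiv ℝ (fun y' => g t x y') y = _ := h
  rw [this]
  simp

private lemma hAux_eq (f : ℝ → (Fin nx → ℝ) → (Fin ny → ℝ) → (Fin nx → ℝ))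
    (g : ℝ → (Fin nx → ℝ) → (Fin ny → ℝ) → (Fin ny → ℝ))
    {t : ℝ} {x : Fin nx → ℝ} {y : Fin ny → ℝ}
    (hd : DifferentiableAt ℝ
      (fun p : ℝ × (Fin nx → ℝ) × (Fin ny → ℝ) => g p.1 p.2.1 p.2.2) (t, x, y)) :
    hAux f g t x y
      = fderiv ℝ (fun p : ℝ × (Fin nx → ℝ) × (Fin ny → ℝ) => g p.1 p.2.1 p.2.2) (t, x, y)
          (1, f t x y, 0) := by
  rw [hAux, deriv_t_eq g hd, fderiv_x_eq g hd, ← map_add]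
  norm_num

private lemma gTilde_eq (f : ℝ → (Fin nx → ℝ) → (Fin ny → ℝ) → (Fin nx → ℝ))
    (g : ℝ → (Fin nx → ℝ) → (Fin ny → ℝ) → (Fin ny → ℝ))
    (Q : (Fin ny → ℝ) →L[ℝ] (Fin ny → ℝ))
    {t : ℝ} {x : Fin nx → ℝ} {u v : Fin ny → ℝ}
    (hd : DifferentiableAt ℝ
      (fun p : ℝ × (Fin nx → ℝ) × (Fin ny → ℝ) => g p.1 p.2.1 p.2.2) (t, x, u + Q v)) :
    gTilde f g Q t x u v
      = fderiv ℝ (fun p : ℝ × (Fin nx → ℝ) × (Fin ny → ℝ) => g p.1 p.2.1 p.2.2) (t, x, u + Q v)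
          (1, f t x (u + Q v), v) := by
  rw [gTilde, hAux_eq f g hd, fderiv_y_eq g hd, ← map_add]
  norm_num

private lemma chain_rule_g (g : ℝ → (Fin nx → ℝ) → (Fin ny → ℝ) → (Fin ny → ℝ))
    {t : ℝ} {X : ℝ → Fin nx → ℝ} {Y : ℝ → Fin ny → ℝ} {dx : Fin nx → ℝ} {dy : Fin ny → ℝ}
    (hd : DifferentiableAt ℝ
      (fun p : ℝ × (Fin nx → ℝ) × (Fin ny → ℝ) => g p.1 p.2.1 p.2.2) (t, X t, Y t))
    (hX : HasDerivAt X dx t) (hY : HasDerivAt Y dy t) :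
    HasDerivAt (fun s => g s (X s) (Y s))
      (fderiv ℝ (fun p : ℝ × (Fin nx → ℝ) × (Fin ny → ℝ) => g p.1 p.2.1 p.2.2) (t, X t, Y t)
        (1, dx, dy)) t := by
  have hγ : HasDerivAt (fun s : ℝ => (s, X s, Y s)) ((1 : ℝ), dx, dy) t :=
    (hasDerivAt_id t).prodMk (hX.prodMk hY)
  exact hd.hasFDerivAt.comp_hasDerivAt t hγ

private lemma split_apply {W : Type*} [NormedAddCommGroup W] [NormedSpace ℝ W]
    (T : (ℝ × (Fin nx → ℝ) × (Fin ny → ℝ)) →L[ℝ] W)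
    (a : ℝ) (w : Fin nx → ℝ) (v : Fin ny → ℝ) :
    T (a, w, v) = T (a, w, 0) + T (0, 0, v) := by
  rw [← map_add]
  norm_num

end AuxLemmas


private lemma implicit_fn {A Y : Type*}
    [NormedAddCommGroup A] [NormedSpace ℝ A] [NormedAddCommGroup Y] [NormedSpace ℝ Y]
    [FiniteDimensional ℝ A] [FiniteDimensional ℝ Y]
    (GG : A × Y → Y) (q₀ : A × Y) (hGG : ContDiffAt ℝ 1 GG q₀) (h0 : GG q₀ = 0)
    (hinv : Function.Bijective (fun v => fderiv ℝ GG q₀ (0, v))) :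
    ∃ φ : A → Y, φ q₀.1 = q₀.2 ∧ ContDiffAt ℝ 1 φ q₀.1 ∧
      (∃ U ∈ nhds q₀.1, ∀ a ∈ U, GG (a, φ a) = 0) ∧
      (∃ V ∈ nhds q₀, ∀ q ∈ V, GG q = 0 → q.2 = φ q.1) := by
  classical
  set DG := fderiv ℝ GG q₀ with hDGdef
  have hDG : HasFDerivAt GG DG q₀ := (hGG.differentiableAt one_ne_zero).hasFDerivAt
  set Φ' : (A × Y) →L[ℝ] (A × Y) := (ContinuousLinearMap.fst ℝ A Y).prod DG with hΦ'def
  have hsplit : ∀ (a : A) (v : Y), DG (a, v) = DG (a, 0) + DG (0, v) := by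
    intro a v
    rw [← map_add]
    norm_num
  have hbij : Function.Bijective ⇑Φ' := by
    constructor
    · rintro ⟨a, v⟩ ⟨a', v'⟩ h
      simp only [hΦ'def, ContinuousLinearMap.prod_apply, ContinuousLinearMap.coe_fst',
        Prod.mk.injEq] at h
      obtain ⟨ha, hd⟩ := h
      subst ha
      rw [hsplit a v, hsplit a v'] at hd
      have : DG (0, v) = DG (0, v') := by
        have := add_left_cancel hd
        exact this
      have := hinv.injective this
      simp [this]
    · rintro ⟨b, w⟩
      obtain ⟨v, hv⟩ := hinv.surjective (w - DG (b, 0))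
      refine ⟨(b, v), ?_⟩
      have hv' : DG (0, v) = w - DG (b, 0) := hv
      simp only [hΦ'def, ContinuousLinearMap.prod_apply, ContinuousLinearMap.coe_fst']
      rw [hsplit b v, hv']
      simp
  set e : (A × Y) ≃L[ℝ] (A × Y) :=
    (LinearEquiv.ofBijective (Φ' : (A × Y) →ₗ[ℝ] (A × Y)) hbij).toContinuousLinearEquiv with hedef
  have hcoe : ((e : (A × Y) ≃L[ℝ] (A × Y)) : (A × Y) →L[ℝ] (A × Y)) = Φ' := by
    apply ContinuousLinearMap.coeFn_injective
    rfl
  set Φ : A × Y → A × Y := fun q => (q.1, GG q) with hΦdef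
  have hΦc : ContDiffAt ℝ 1 Φ q₀ := contDiffAt_fst.prodMk hGG
  have hΦ'₀ : HasFDerivAt Φ ((e : (A × Y) →L[ℝ] (A × Y))) q₀ := by
    rw [hcoe]
    exact (hasFDerivAt_fst).prodMk hDG
  set H := hΦc.toOpenPartialHomeomorph Φ hΦ'₀ one_ne_zero with hHdef
  have hHcoe : ⇑H = Φ := rfl
  have hq₀src : q₀ ∈ H.source := hΦc.mem_toOpenPartialHomeomorph_source hΦ'₀ one_ne_zero
  have hΦq₀ : Φ q₀ = (q₀.1, 0) := by simp [hΦdef, h0]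
  have htgt : (q₀.1, (0 : Y)) ∈ H.target := by
    rw [← hΦq₀]
    exact hΦc.image_mem_toOpenPartialHomeomorph_target hΦ'₀ one_ne_zero
  have hsymmCD : ContDiffAt ℝ 1 (⇑H.symm) (q₀.1, 0) := by
    have h1 := hΦc.to_localInverse (f' := e) hΦ'₀ one_ne_zero
    rw [hΦq₀] at h1
    exact h1
  refine ⟨fun a => (H.symm (a, 0)).2, ?_, ?_, ?_, ?_⟩
  · have : H.symm (q₀.1, 0) = q₀ := by
      rw [← hΦq₀, ← hHcoe]
      exact H.left_inv hq₀src
    show (H.symm (q₀.1, 0)).2 = q₀.2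
    rw [this]
  · have hemb : ContDiffAt ℝ 1 (fun a : A => (a, (0 : Y))) q₀.1 :=
      contDiffAt_id.prodMk contDiffAt_const
    exact contDiffAt_snd.comp q₀.1 (hsymmCD.comp q₀.1 hemb)
  · refine ⟨{a | (a, (0 : Y)) ∈ H.target}, ?_, ?_⟩
    · exact (H.open_target.preimage (Continuous.prodMk_left (0 : Y))).mem_nhds htgt
    · intro a ha
      have hr : Φ (H.symm (a, 0)) = (a, 0) := by
        rw [← hHcoe]
        exact H.right_inv ha
      have h1 : (H.symm (a, 0)).1 = a := congrArg Prod.fst hr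
      have h2 : GG (H.symm (a, 0)) = 0 := congrArg Prod.snd hr
      have heq : ((a : A), (H.symm (a, 0)).2) = H.symm (a, 0) := by
        refine Prod.ext_iff.mpr ⟨h1.symm, rfl⟩
      show GG ((a : A), (H.symm (a, 0)).2) = 0
      rw [heq, h2]
  · refine ⟨H.source, H.open_source.mem_nhds hq₀src, ?_⟩
    intro q hq hGGq
    have hΦq : Φ q = (q.1, 0) := by simp [hΦdef, hGGq]
    have : H.symm (q.1, 0) = q := by
      rw [← hΦq, ← hHcoe]
      exact H.left_inv hq
    show q.2 = (H.symm (q.1, 0)).2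
    rw [this]
/-- **Existence and local uniqueness for index-2 semi-explicit DAEs** with
constant kernel of `∂_y g`: if `(x₀,y₀)` is a consistent initial value (i.e.
`g(t₀,x₀,y₀) = 0` and the hidden constraint `h(t₀,x₀,y₀) + ∂_y g(t₀,x₀,y₀) w₀ = 0`
has a solution `w₀`) and the derivative `∂_v g̃` is invertible at the point
`(t₀, x₀, u₀, v₀)` built from the regular and singular variables `u₀ = P y₀`,
`v₀ = P w₀ + Q y₀`, then the DAE has a locally unique `C¹` solution through
`(x₀, y₀)`. -/
theorem dae_index_two_existence_uniqueness (nx ny : ℕ)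
    (I : Set ℝ) (hIopen : IsOpen I) (hIint : I.OrdConnected)
    (D₁ : Set (Fin nx → ℝ)) (hD₁ : IsOpen D₁)
    (D₂ : Set (Fin ny → ℝ)) (hD₂ : IsOpen D₂)
    (f : ℝ → (Fin nx → ℝ) → (Fin ny → ℝ) → (Fin nx → ℝ))
    (g : ℝ → (Fin nx → ℝ) → (Fin ny → ℝ) → (Fin ny → ℝ))
    (hf : ContDiffOn ℝ 1 (fun p : ℝ × (Fin nx → ℝ) × (Fin ny → ℝ) =>
      f p.1 p.2.1 p.2.2) (I ×ˢ D₁ ×ˢ D₂))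
    (hfLip : ∃ L : NNReal, ∀ t ∈ I, LipschitzOnWith L
      (fun p : (Fin nx → ℝ) × (Fin ny → ℝ) => f t p.1 p.2) (D₁ ×ˢ D₂))
    (hg : ContDiffOn ℝ 2 (fun p : ℝ × (Fin nx → ℝ) × (Fin ny → ℝ) =>
      g p.1 p.2.1 p.2.2) (I ×ˢ D₁ ×ˢ D₂))
    -- the kernel of `∂_y g` is a fixed subspace `K` (assumption (A2))
    (K : Submodule ℝ (Fin ny → ℝ))
    (hker : ∀ t ∈ I, ∀ x ∈ D₁, ∀ y ∈ D₂,
      LinearMap.ker (fderiv ℝ (fun y' => g t x y') y : (Fin ny → ℝ) →ₗ[ℝ] (Fin ny → ℝ)) = K)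
    -- `Q` is a linear projection onto `K`, and `P = Id − Q`
    (Q : (Fin ny → ℝ) →L[ℝ] (Fin ny → ℝ)) (hQproj : Q.comp Q = Q)
    (hQrange : LinearMap.range (Q : (Fin ny → ℝ) →ₗ[ℝ] (Fin ny → ℝ)) = K)
    (P : (Fin ny → ℝ) →L[ℝ] (Fin ny → ℝ))
    (hP : P = ContinuousLinearMap.id ℝ (Fin ny → ℝ) - Q)
    -- consistent initial values
    (t₀ : ℝ) (ht₀ : t₀ ∈ I)
    (x₀ : Fin nx → ℝ) (hx₀ : x₀ ∈ D₁)
    (y₀ : Fin ny → ℝ) (hy₀ : y₀ ∈ D₂)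
    (hcons : g t₀ x₀ y₀ = 0)
    (w₀ : Fin ny → ℝ)
    (hw₀ : hAux f g t₀ x₀ y₀ + fderiv ℝ (fun y' => g t₀ x₀ y') y₀ w₀ = 0)
    (u₀ : Fin ny → ℝ) (hu₀ : u₀ = P y₀)
    (v₀ : Fin ny → ℝ) (hv₀ : v₀ = P w₀ + Q y₀)
    -- invertibility of `∂_v g̃` at `(t₀, x₀, u₀, v₀)`
    (hinv : Function.Bijective ⇑(fderiv ℝ (fun v => gTilde f g Q t₀ x₀ u₀ v) v₀)) :
    ∃ (J : Set ℝ) (x : ℝ → Fin nx → ℝ) (y : ℝ → Fin ny → ℝ),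
      t₀ ∈ J ∧ J ⊆ I ∧ IsOpen J ∧ J.OrdConnected ∧
      ContDiffOn ℝ 1 x J ∧ ContDiffOn ℝ 1 y J ∧
      (∀ t ∈ J, x t ∈ D₁) ∧ (∀ t ∈ J, y t ∈ D₂) ∧
      (∀ t ∈ J, HasDerivAt x (f t (x t) (y t)) t) ∧
      (∀ t ∈ J, g t (x t) (y t) = 0) ∧
      x t₀ = x₀ ∧ y t₀ = y₀ ∧
      (∀ (J' : Set ℝ) (x' : ℝ → Fin nx → ℝ) (y' : ℝ → Fin ny → ℝ),
        t₀ ∈ J' → J' ⊆ I → IsOpen J' → J'.OrdConnected →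
        ContDiffOn ℝ 1 x' J' → ContDiffOn ℝ 1 y' J' →
        (∀ t ∈ J', x' t ∈ D₁) → (∀ t ∈ J', y' t ∈ D₂) →
        (∀ t ∈ J', HasDerivAt x' (f t (x' t) (y' t)) t) →
        (∀ t ∈ J', g t (x' t) (y' t) = 0) →
        x' t₀ = x₀ → y' t₀ = y₀ →
        ∀ᶠ t in nhds t₀, x' t = x t ∧ y' t = y t) := by
  classical
  obtain ⟨Lf, hLf⟩ := hfLip
  have hΩ : IsOpen (I ×ˢ D₁ ×ˢ D₂) := hIopen.prod (hD₁.prod hD₂)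
  -- projection identities
  have hQQ : ∀ z, Q (Q z) = Q z := fun z => by
    have := ContinuousLinearMap.ext_iff.mp hQproj z
    simpa using this
  have hPz : ∀ z, P z = z - Q z := fun z => by simp [hP]
  have hPQ : ∀ z, P (Q z) = 0 := fun z => by rw [hPz, hQQ, sub_self]
  have hQP : ∀ z, Q (P z) = 0 := fun z => by rw [hPz, map_sub, hQQ, sub_self]
  have hPQsum : ∀ z, P z + Q z = z := fun z => by rw [hPz, sub_add_cancel]
  have hPP : ∀ z, P (P z) = P z := fun z => by rw [hPz (P z), hQP z, sub_zero]
  -- the kernel facts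
  have hBQ : ∀ t ∈ I, ∀ x ∈ D₁, ∀ y ∈ D₂, ∀ z,
      fderiv ℝ (fun y' => g t x y') y (Q z) = 0 := by
    intro t ht x hx y hy z
    have hK := hker t ht x hx y hy
    have hmem : Q z ∈ LinearMap.ker (fderiv ℝ (fun y' => g t x y') y : (Fin ny → ℝ) →ₗ[ℝ] (Fin ny → ℝ)) := by
      rw [hK, ← hQrange]
      exact ⟨z, rfl⟩
    exact LinearMap.mem_ker.mp hmem
  have hBP : ∀ t ∈ I, ∀ x ∈ D₁, ∀ y ∈ D₂, ∀ z,
      fderiv ℝ (fun y' => g t x y') y (P z) = fderiv ℝ (fun y' => g t x y') y z := by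
    intro t ht x hx y hy z
    rw [hPz, map_sub, hBQ t ht x hx y hy, sub_zero]
  have hQv₀ : Q v₀ = Q y₀ := by rw [hv₀, map_add, hQP, hQQ, zero_add]
  have hy₀eq : u₀ + Q v₀ = y₀ := by rw [hu₀, hQv₀, hPQsum]
  -- differentiability of the uncurried `g`
  have hgdiff : ∀ p ∈ I ×ˢ D₁ ×ˢ D₂,
      DifferentiableAt ℝ (fun p : ℝ × (Fin nx → ℝ) × (Fin ny → ℝ) => g p.1 p.2.1 p.2.2) p :=
    fun p hp => (hg.differentiableOn (by norm_num)).differentiableAt (hΩ.mem_nhds hp)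
  have hp₀ : ((t₀, x₀, y₀) : ℝ × (Fin nx → ℝ) × (Fin ny → ℝ)) ∈ I ×ˢ D₁ ×ˢ D₂ :=
    ⟨ht₀, hx₀, hy₀⟩
  -- the reduced function as a map of one variable
  set GG : ((ℝ × (Fin nx → ℝ) × (Fin ny → ℝ)) × (Fin ny → ℝ)) → (Fin ny → ℝ) :=
    fun q => gTilde f g Q q.1.1 q.1.2.1 q.1.2.2 q.2 with hGGdef
  set σf : ((ℝ × (Fin nx → ℝ) × (Fin ny → ℝ)) × (Fin ny → ℝ)) →
      (ℝ × (Fin nx → ℝ) × (Fin ny → ℝ)) :=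
    fun q => (q.1.1, q.1.2.1, q.1.2.2 + Q q.2) with hσdef
  have hσ : ContDiff ℝ 1 σf := by
    apply ContDiff.prodMk (contDiff_fst.comp contDiff_fst)
    apply ContDiff.prodMk ((contDiff_fst.comp contDiff_snd).comp contDiff_fst)
    exact ((contDiff_snd.comp contDiff_snd).comp contDiff_fst).add
      (Q.contDiff.comp contDiff_snd)
  have hS : IsOpen (σf ⁻¹' (I ×ˢ D₁ ×ˢ D₂)) := hΩ.preimage hσ.continuous
  set q₀ : ((ℝ × (Fin nx → ℝ) × (Fin ny → ℝ)) × (Fin ny → ℝ)) := ((t₀, x₀, u₀), v₀) with hq₀def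
  have hσq₀ : σf q₀ = (t₀, x₀, y₀) := by
    simp only [hσdef, hq₀def]
    rw [hy₀eq]
  have hq₀S : q₀ ∈ σf ⁻¹' (I ×ˢ D₁ ×ˢ D₂) := by
    simp only [mem_preimage, hσq₀]
    exact hp₀
  have hGGrepr : ∀ q ∈ σf ⁻¹' (I ×ˢ D₁ ×ˢ D₂),
      GG q = fderiv ℝ (fun p : ℝ × (Fin nx → ℝ) × (Fin ny → ℝ) => g p.1 p.2.1 p.2.2) (σf q)
        (1, f (σf q).1 (σf q).2.1 (σf q).2.2, q.2) :=
    fun q hq => gTilde_eq f g Q (hgdiff _ hq)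
  have hGGc : ContDiffOn ℝ 1 GG (σf ⁻¹' (I ×ˢ D₁ ×ˢ D₂)) := by
    have hDgC : ContDiffOn ℝ 1
        (fderiv ℝ (fun p : ℝ × (Fin nx → ℝ) × (Fin ny → ℝ) => g p.1 p.2.1 p.2.2))
        (I ×ˢ D₁ ×ˢ D₂) := hg.fderiv_of_isOpen hΩ (by norm_num)
    have hmaps : MapsTo σf (σf ⁻¹' (I ×ˢ D₁ ×ˢ D₂)) (I ×ˢ D₁ ×ˢ D₂) := fun q hq => hq
    have h1 := hDgC.comp hσ.contDiffOn hmaps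
    have hfσ := hf.comp hσ.contDiffOn hmaps
    have h2 : ContDiffOn ℝ 1
        (fun q : ((ℝ × (Fin nx → ℝ) × (Fin ny → ℝ)) × (Fin ny → ℝ)) =>
          (((1 : ℝ), f (σf q).1 (σf q).2.1 (σf q).2.2, q.2) :
            ℝ × (Fin nx → ℝ) × (Fin ny → ℝ))) (σf ⁻¹' (I ×ˢ D₁ ×ˢ D₂)) :=
      contDiffOn_const.prodMk (hfσ.prodMk contDiff_snd.contDiffOn)
    exact (h1.clm_apply h2).congr hGGrepr
  have hGGq₀ : ContDiffAt ℝ 1 GG q₀ := hGGc.contDiffAt (hS.mem_nhds hq₀S)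
  have hB₀Q : ∀ z, fderiv ℝ (fun y' => g t₀ x₀ y') y₀ (Q z) = 0 :=
    hBQ t₀ ht₀ x₀ hx₀ y₀ hy₀
  have hGG0 : GG q₀ = 0 := by
    show gTilde f g Q t₀ x₀ u₀ v₀ = 0
    rw [gTilde, hy₀eq]
    have hBv₀ : fderiv ℝ (fun y' => g t₀ x₀ y') y₀ v₀
        = fderiv ℝ (fun y' => g t₀ x₀ y') y₀ w₀ := by
      rw [hv₀, map_add, hB₀Q, add_zero, hBP t₀ ht₀ x₀ hx₀ y₀ hy₀]
    rw [hBv₀]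
    exact hw₀
  -- translate the invertibility assumption
  have hDGfull : HasFDerivAt GG (fderiv ℝ GG q₀) q₀ := (hGGq₀.differentiableAt one_ne_zero).hasFDerivAt
  have hinvDG : Function.Bijective (fun v : Fin ny → ℝ => fderiv ℝ GG q₀ ((0, 0, 0), v)) := by
    have hι : HasFDerivAt
        (fun v : Fin ny → ℝ => ((((t₀, x₀, u₀) : ℝ × (Fin nx → ℝ) × (Fin ny → ℝ)), v)))
        ((0 : (Fin ny → ℝ) →L[ℝ] (ℝ × (Fin nx → ℝ) × (Fin ny → ℝ))).prod
          (ContinuousLinearMap.id ℝ (Fin ny → ℝ))) v₀ :=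
      (hasFDerivAt_const _ _).prodMk (hasFDerivAt_id _)
    have hcompd := hDGfull.comp v₀ hι
    have heqf : (fun v => gTilde f g Q t₀ x₀ u₀ v)
        = (GG ∘ fun v : Fin ny → ℝ =>
            ((((t₀, x₀, u₀) : ℝ × (Fin nx → ℝ) × (Fin ny → ℝ)), v))) := rfl
    rw [heqf] at hinv
    rw [hcompd.fderiv] at hinv
    convert hinv using 2 with v
    rfl
  -- the implicit function
  obtain ⟨φ, hφq₀, hφCD, ⟨U₀, hU₀nhds, hU₀prop⟩, ⟨V₀, hV₀nhds, hV₀uniq⟩⟩ :=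
    implicit_fn GG q₀ hGGq₀ hGG0 hinvDG
  obtain ⟨Kφ, sLip, hsLipnhds, hφLip⟩ := hφCD.exists_lipschitzOnWith
  obtain ⟨sCD, hsCDnhds, hφC1⟩ := hφCD.contDiffOn le_rfl (by simp)
  have hφa₀ : φ (t₀, x₀, u₀) = v₀ := hφq₀
  have hφca : ContinuousAt φ (t₀, x₀, u₀) := hφCD.continuousAt
  -- a good open neighbourhood of (t₀, x₀, u₀)
  obtain ⟨U, hUopen, hUa₀, hφC1U, hφLipU, hUzero, hUΩ⟩ :
      ∃ U : Set (ℝ × (Fin nx → ℝ) × (Fin ny → ℝ)), IsOpen U ∧ (t₀, x₀, u₀) ∈ U ∧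
        ContDiffOn ℝ 1 φ U ∧ LipschitzOnWith Kφ φ U ∧
        (∀ a ∈ U, GG (a, φ a) = 0) ∧
        (∀ a ∈ U, ((a.1, a.2.1, a.2.2 + Q (φ a)) : ℝ × (Fin nx → ℝ) × (Fin ny → ℝ))
          ∈ I ×ˢ D₁ ×ˢ D₂) := by
    have hσφca : ContinuousAt
        (fun a : ℝ × (Fin nx → ℝ) × (Fin ny → ℝ) =>
          ((a.1, a.2.1, a.2.2 + Q (φ a)) : ℝ × (Fin nx → ℝ) × (Fin ny → ℝ)))
        (t₀, x₀, u₀) := by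
      refine continuous_fst.continuousAt.prodMk
        ((continuous_snd.fst).continuousAt.prodMk ?_)
      exact (continuous_snd.snd).continuousAt.add (Q.continuous.continuousAt.comp hφca)
    have hmem0 : ((t₀, x₀, u₀ + Q (φ (t₀, x₀, u₀))) : ℝ × (Fin nx → ℝ) × (Fin ny → ℝ))
        ∈ I ×ˢ D₁ ×ˢ D₂ := by
      rw [hφa₀, hy₀eq]
      exact hp₀
    have hm : {a : ℝ × (Fin nx → ℝ) × (Fin ny → ℝ) |
        ((a.1, a.2.1, a.2.2 + Q (φ a)) : ℝ × (Fin nx → ℝ) × (Fin ny → ℝ)) ∈ I ×ˢ D₁ ×ˢ D₂}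
        ∈ nhds (t₀, x₀, u₀) := hσφca.preimage_mem_nhds (hΩ.mem_nhds hmem0)
    have hall : U₀ ∩ sLip ∩ sCD ∩ {a : ℝ × (Fin nx → ℝ) × (Fin ny → ℝ) |
        ((a.1, a.2.1, a.2.2 + Q (φ a)) : ℝ × (Fin nx → ℝ) × (Fin ny → ℝ)) ∈ I ×ˢ D₁ ×ˢ D₂}
        ∈ nhds (t₀, x₀, u₀) :=
      Filter.inter_mem (Filter.inter_mem (Filter.inter_mem hU₀nhds hsLipnhds) hsCDnhds) hm
    obtain ⟨U, hUsub, hUopen, hUa₀⟩ := mem_nhds_iff.mp hall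
    refine ⟨U, hUopen, hUa₀, hφC1.mono fun a ha => (hUsub ha).1.2,
      hφLip.mono fun a ha => (hUsub ha).1.1.2, fun a ha => hU₀prop a (hUsub ha).1.1.1,
      fun a ha => (hUsub ha).2⟩
  -- the reduced vector field
  set FF : ℝ → ((Fin nx → ℝ) × (Fin ny → ℝ)) → ((Fin nx → ℝ) × (Fin ny → ℝ)) :=
    fun t z => (f t z.1 (z.2 + Q (φ (t, z.1, z.2))), P (φ (t, z.1, z.2))) with hFFdef
  set z₀ : (Fin nx → ℝ) × (Fin ny → ℝ) := (x₀, u₀) with hz₀def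
  obtain ⟨ε, hε, hballU⟩ := Metric.isOpen_iff.mp hUopen _ hUa₀
  set R : ℝ := ε / 2 with hRdef
  have hR : 0 < R := by positivity
  have hsubU : ∀ t ∈ Icc (t₀ - R) (t₀ + R), ∀ z ∈ Metric.closedBall z₀ R,
      ((t, z.1, z.2) : ℝ × (Fin nx → ℝ) × (Fin ny → ℝ)) ∈ U := by
    intro t ht z hz
    apply hballU
    have h1 : dist t t₀ ≤ R := by
      rw [Real.dist_eq, abs_sub_le_iff]
      constructor <;> linarith [ht.1, ht.2]
    have h2 : dist z z₀ ≤ R := Metric.mem_closedBall.mp hz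
    have heq : dist ((t, z.1, z.2) : ℝ × (Fin nx → ℝ) × (Fin ny → ℝ)) (t₀, x₀, u₀)
        = max (dist t t₀) (dist z z₀) := by
      simp [Prod.dist_eq, hz₀def]
    refine lt_of_le_of_lt (heq.le.trans (max_le h1 h2)) ?_
    rw [hRdef]; linarith
  -- Lipschitz property of the reduced vector field
  set Lc : NNReal := Lf * (1 + ‖Q‖₊ * Kφ) + ‖P‖₊ * Kφ with hLcdef
  have hLcoe : (Lc : ℝ) = (Lf : ℝ) * (1 + ‖Q‖ * (Kφ : ℝ)) + ‖P‖ * (Kφ : ℝ) := by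
    push_cast
    rfl
  have hkφ : (0 : ℝ) ≤ (Kφ : ℝ) := Kφ.2
  have hlf : (0 : ℝ) ≤ (Lf : ℝ) := Lf.2
  have hFlip : ∀ t ∈ Icc (t₀ - R) (t₀ + R),
      LipschitzOnWith Lc (FF t) (Metric.closedBall z₀ R) := by
    intro t ht
    rw [lipschitzOnWith_iff_dist_le_mul]
    intro z hz z' hz'
    have haU : ((t, z.1, z.2) : ℝ × (Fin nx → ℝ) × (Fin ny → ℝ)) ∈ U := hsubU t ht z hz
    have haU' : ((t, z'.1, z'.2) : ℝ × (Fin nx → ℝ) × (Fin ny → ℝ)) ∈ U := hsubU t ht z' hz'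
    have hΩz := hUΩ _ haU
    have hΩz' := hUΩ _ haU'
    have htI : t ∈ I := hΩz.1
    have hdista : dist ((t, z.1, z.2) : ℝ × (Fin nx → ℝ) × (Fin ny → ℝ)) (t, z'.1, z'.2)
        = dist z z' := by
      simp only [Prod.dist_eq, dist_self]
      exact max_eq_right (le_max_of_le_left dist_nonneg)
    have hdφ : dist (φ (t, z.1, z.2)) (φ (t, z'.1, z'.2)) ≤ (Kφ : ℝ) * dist z z' := by
      rw [← hdista]
      exact hφLipU.dist_le_mul _ haU _ haU'
    have hd2 : dist (P (φ (t, z.1, z.2))) (P (φ (t, z'.1, z'.2)))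
        ≤ ‖P‖ * (Kφ : ℝ) * dist z z' := by
      calc dist (P (φ (t, z.1, z.2))) (P (φ (t, z'.1, z'.2)))
          ≤ ‖P‖ * dist (φ (t, z.1, z.2)) (φ (t, z'.1, z'.2)) := P.lipschitz.dist_le_mul _ _
        _ ≤ ‖P‖ * ((Kφ : ℝ) * dist z z') :=
            mul_le_mul_of_nonneg_left hdφ (norm_nonneg _)
        _ = ‖P‖ * (Kφ : ℝ) * dist z z' := by ring
    have hdy : dist (z.2 + Q (φ (t, z.1, z.2))) (z'.2 + Q (φ (t, z'.1, z'.2)))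
        ≤ (1 + ‖Q‖ * (Kφ : ℝ)) * dist z z' := by
      calc dist (z.2 + Q (φ (t, z.1, z.2))) (z'.2 + Q (φ (t, z'.1, z'.2)))
          ≤ dist z.2 z'.2 + dist (Q (φ (t, z.1, z.2))) (Q (φ (t, z'.1, z'.2))) :=
            dist_add_add_le _ _ _ _
        _ ≤ dist z z' + ‖Q‖ * ((Kφ : ℝ) * dist z z') := by
            have hsnd : dist z.2 z'.2 ≤ dist z z' := by
              rw [Prod.dist_eq]; exact le_max_right _ _
            refine add_le_add hsnd ?_
            exact (Q.lipschitz.dist_le_mul _ _).trans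
              (mul_le_mul_of_nonneg_left hdφ (norm_nonneg _))
        _ = (1 + ‖Q‖ * (Kφ : ℝ)) * dist z z' := by ring
    have hd1 : dist (f t z.1 (z.2 + Q (φ (t, z.1, z.2)))) (f t z'.1 (z'.2 + Q (φ (t, z'.1, z'.2))))
        ≤ (Lf : ℝ) * ((1 + ‖Q‖ * (Kφ : ℝ)) * dist z z') := by
      have hmem1 : ((z.1, z.2 + Q (φ (t, z.1, z.2))) : (Fin nx → ℝ) × (Fin ny → ℝ))
          ∈ D₁ ×ˢ D₂ := ⟨hΩz.2.1, hΩz.2.2⟩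
      have hmem2 : ((z'.1, z'.2 + Q (φ (t, z'.1, z'.2))) : (Fin nx → ℝ) × (Fin ny → ℝ))
          ∈ D₁ ×ˢ D₂ := ⟨hΩz'.2.1, hΩz'.2.2⟩
      have hbase := (hLf t htI).dist_le_mul _ hmem1 _ hmem2
      refine hbase.trans ?_
      have hdpair : dist ((z.1, z.2 + Q (φ (t, z.1, z.2))) : (Fin nx → ℝ) × (Fin ny → ℝ))
          (z'.1, z'.2 + Q (φ (t, z'.1, z'.2))) ≤ (1 + ‖Q‖ * (Kφ : ℝ)) * dist z z' := by
        rw [Prod.dist_eq]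
        apply max_le
        · have h1 : dist z.1 z'.1 ≤ dist z z' := by
            rw [Prod.dist_eq]; exact le_max_left _ _
          have h2 : 0 ≤ ‖Q‖ * (Kφ : ℝ) * dist z z' :=
            mul_nonneg (mul_nonneg (norm_nonneg Q) hkφ) dist_nonneg
          nlinarith
        · exact hdy
      exact mul_le_mul_of_nonneg_left hdpair hlf
    have : dist (FF t z) (FF t z')
        = max (dist (f t z.1 (z.2 + Q (φ (t, z.1, z.2)))) (f t z'.1 (z'.2 + Q (φ (t, z'.1, z'.2)))))
            (dist (P (φ (t, z.1, z.2))) (P (φ (t, z'.1, z'.2)))) := by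
      rw [hFFdef, Prod.dist_eq]
    rw [this, hLcoe]
    apply max_le
    · refine hd1.trans ?_
      have h2 : 0 ≤ ‖P‖ * (Kφ : ℝ) * dist z z' :=
        mul_nonneg (mul_nonneg (norm_nonneg P) hkφ) dist_nonneg
      nlinarith
    · refine hd2.trans ?_
      have h2 : 0 ≤ (Lf : ℝ) * ((1 + ‖Q‖ * (Kφ : ℝ)) * dist z z') :=
        mul_nonneg hlf (mul_nonneg (by positivity) dist_nonneg)
      nlinarith
  -- joint continuity of the reduced field on the compact region
  have hφcontU : ContinuousOn φ U := hφC1U.continuousOn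
  have hFFcont : ContinuousOn (fun p : ℝ × ((Fin nx → ℝ) × (Fin ny → ℝ)) => FF p.1 p.2)
      (Icc (t₀ - R) (t₀ + R) ×ˢ Metric.closedBall z₀ R) := by
    have hρc : Continuous (fun p : ℝ × ((Fin nx → ℝ) × (Fin ny → ℝ)) =>
        ((p.1, p.2.1, p.2.2) : ℝ × (Fin nx → ℝ) × (Fin ny → ℝ))) :=
      continuous_fst.prodMk (continuous_snd.fst.prodMk continuous_snd.snd)
    have hmapsU : MapsTo (fun p : ℝ × ((Fin nx → ℝ) × (Fin ny → ℝ)) =>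
        ((p.1, p.2.1, p.2.2) : ℝ × (Fin nx → ℝ) × (Fin ny → ℝ)))
        (Icc (t₀ - R) (t₀ + R) ×ˢ Metric.closedBall z₀ R) U :=
      fun p hp => hsubU p.1 hp.1 p.2 hp.2
    have hφρ : ContinuousOn (fun p : ℝ × ((Fin nx → ℝ) × (Fin ny → ℝ)) =>
        φ (p.1, p.2.1, p.2.2)) (Icc (t₀ - R) (t₀ + R) ×ˢ Metric.closedBall z₀ R) :=
      hφcontU.comp hρc.continuousOn hmapsU
    have hyc : ContinuousOn (fun p : ℝ × ((Fin nx → ℝ) × (Fin ny → ℝ)) =>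
        p.2.2 + Q (φ (p.1, p.2.1, p.2.2))) (Icc (t₀ - R) (t₀ + R) ×ˢ Metric.closedBall z₀ R) :=
      (continuous_snd.snd.continuousOn).add (Q.continuous.comp_continuousOn hφρ)
    have hargs : ContinuousOn (fun p : ℝ × ((Fin nx → ℝ) × (Fin ny → ℝ)) =>
        ((p.1, p.2.1, p.2.2 + Q (φ (p.1, p.2.1, p.2.2))) : ℝ × (Fin nx → ℝ) × (Fin ny → ℝ)))
        (Icc (t₀ - R) (t₀ + R) ×ˢ Metric.closedBall z₀ R) :=
      continuous_fst.continuousOn.prodMk (continuous_snd.fst.continuousOn.prodMk hyc)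
    have hmapsΩ : MapsTo (fun p : ℝ × ((Fin nx → ℝ) × (Fin ny → ℝ)) =>
        ((p.1, p.2.1, p.2.2 + Q (φ (p.1, p.2.1, p.2.2))) : ℝ × (Fin nx → ℝ) × (Fin ny → ℝ)))
        (Icc (t₀ - R) (t₀ + R) ×ˢ Metric.closedBall z₀ R) (I ×ˢ D₁ ×ˢ D₂) :=
      fun p hp => hUΩ _ (hmapsU hp)
    have hcomp1 : ContinuousOn (fun p : ℝ × ((Fin nx → ℝ) × (Fin ny → ℝ)) =>
        f p.1 p.2.1 (p.2.2 + Q (φ (p.1, p.2.1, p.2.2))))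
        (Icc (t₀ - R) (t₀ + R) ×ˢ Metric.closedBall z₀ R) :=
      hf.continuousOn.comp hargs hmapsΩ
    have hcomp2 : ContinuousOn (fun p : ℝ × ((Fin nx → ℝ) × (Fin ny → ℝ)) =>
        P (φ (p.1, p.2.1, p.2.2))) (Icc (t₀ - R) (t₀ + R) ×ˢ Metric.closedBall z₀ R) :=
      P.continuous.comp_continuousOn hφρ
    exact hcomp1.prodMk hcomp2
  have hcptK : IsCompact (Icc (t₀ - R) (t₀ + R) ×ˢ Metric.closedBall z₀ R) :=
    isCompact_Icc.prod (isCompact_closedBall _ _)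
  obtain ⟨C, hC⟩ := hcptK.exists_bound_of_continuousOn hFFcont
  set C' : ℝ := max C 0 with hC'def
  have hC'0 : 0 ≤ C' := le_max_right _ _
  set δ : ℝ := min R (R / (C' + 1)) with hδdef
  have hδpos : 0 < δ := lt_min hR (by positivity)
  have hδR : δ ≤ R := min_le_left _ _
  have hIccsub : Icc (t₀ - δ) (t₀ + δ) ⊆ Icc (t₀ - R) (t₀ + R) :=
    Icc_subset_Icc (by linarith) (by linarith)
  have hpl : IsPicardLindelof FF (tmin := t₀ - δ) (tmax := t₀ + δ)
      ⟨t₀, by linarith, by linarith⟩ z₀ ⟨R, hR.le⟩ 0 ⟨C', hC'0⟩ Lc :=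
    { lipschitzOnWith := fun t ht => hFlip t (hIccsub ht)
      continuousOn := fun z hz => hFFcont.comp
        (Continuous.continuousOn (continuous_id.prodMk continuous_const))
        (fun t ht => ⟨hIccsub ht, hz⟩)
      norm_le := fun t ht z hz => (hC (t, z) ⟨hIccsub ht, hz⟩).trans (le_max_left _ _)
      mul_max_le := by
        have hmax : max (t₀ + δ - t₀) (t₀ - (t₀ - δ)) = δ := by
          rw [show t₀ + δ - t₀ = δ by ring, show t₀ - (t₀ - δ) = δ by ring, max_self]
        have key : C' * δ ≤ R := by
          have h1 : δ ≤ R / (C' + 1) := min_le_right _ _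
          have h2 : (0 : ℝ) < C' + 1 := by linarith
          have h3 : C' * δ ≤ C' * (R / (C' + 1)) := mul_le_mul_of_nonneg_left h1 hC'0
          have h4 : C' * (R / (C' + 1)) ≤ R := by
            rw [mul_div_assoc', div_le_iff₀ h2]
            nlinarith
          linarith
        simp only [NNReal.coe_mk, NNReal.coe_zero, sub_zero, tsub_zero]
        rw [hmax]
        exact key }
  obtain ⟨α, hα0, hαderiv⟩ := hpl.exists_eq_forall_mem_Icc_hasDerivWithinAt₀
  replace hα0 : α t₀ = z₀ := hα0
  have hαcont : ContinuousOn α (Icc (t₀ - δ) (t₀ + δ)) :=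
    fun s hs => (hαderiv s hs).continuousWithinAt
  have ht₀Ioo : t₀ ∈ Ioo (t₀ - δ) (t₀ + δ) := ⟨by linarith, by linarith⟩
  have hIccnhds : Icc (t₀ - δ) (t₀ + δ) ∈ nhds t₀ := Icc_mem_nhds ht₀Ioo.1 ht₀Ioo.2
  have hαct₀ : ContinuousAt α t₀ :=
    (hαcont t₀ (mem_of_mem_nhds hIccnhds)).continuousAt hIccnhds
  have hball0 : {s : ℝ | α s ∈ Metric.ball z₀ R} ∈ nhds t₀ :=
    hαct₀.preimage_mem_nhds (Metric.isOpen_ball.mem_nhds (by rw [hα0]; exact Metric.mem_ball_self hR))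
  obtain ⟨r, hrpos, hrsub⟩ := Metric.mem_nhds_iff.mp
    (Filter.inter_mem hball0 (Ioo_mem_nhds ht₀Ioo.1 ht₀Ioo.2))
  set J : Set ℝ := Ioo (t₀ - r) (t₀ + r) with hJdef
  have hJfacts : ∀ t ∈ J, α t ∈ Metric.ball z₀ R ∧ t ∈ Ioo (t₀ - δ) (t₀ + δ) := by
    intro t ht
    have : t ∈ Metric.ball t₀ r := by rw [Real.ball_eq_Ioo]; exact ht
    exact hrsub this
  have ht₀J : t₀ ∈ J := ⟨by linarith, by linarith⟩
  have hJIcc : ∀ t ∈ J, t ∈ Icc (t₀ - δ) (t₀ + δ) :=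
    fun t ht => Ioo_subset_Icc_self (hJfacts t ht).2
  have hαt : ∀ t ∈ J, HasDerivAt α (FF t (α t)) t := fun t ht =>
    (hαderiv t (hJIcc t ht)).hasDerivAt
      (Icc_mem_nhds (hJfacts t ht).2.1 (hJfacts t ht).2.2)
  have hatU : ∀ t ∈ J, ((t, (α t).1, (α t).2) : ℝ × (Fin nx → ℝ) × (Fin ny → ℝ)) ∈ U :=
    fun t ht => hsubU t (hIccsub (hJIcc t ht)) (α t)
      (Metric.ball_subset_closedBall (hJfacts t ht).1)
  have hatΩ : ∀ t ∈ J,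
      ((t, (α t).1, (α t).2 + Q (φ (t, (α t).1, (α t).2))) : ℝ × (Fin nx → ℝ) × (Fin ny → ℝ))
        ∈ I ×ˢ D₁ ×ˢ D₂ :=
    fun t ht => hUΩ _ (hatU t ht)
  set xx : ℝ → Fin nx → ℝ := fun s => (α s).1 with hxxdef
  set φα : ℝ → Fin ny → ℝ := fun s => φ (s, (α s).1, (α s).2) with hφαdef
  set yy : ℝ → Fin ny → ℝ := fun s => (α s).2 + Q (φ (s, (α s).1, (α s).2)) with hyydef
  -- smoothness of α on J
  have hαJcont : ContinuousOn α J := hαcont.mono (fun t ht => hJIcc t ht)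
  have hderivα : ∀ t ∈ J, deriv α t = FF t (α t) := fun t ht => (hαt t ht).deriv
  have hFFα : ContinuousOn (fun t => FF t (α t)) J := by
    refine hFFcont.comp (continuousOn_id.prodMk hαJcont) ?_
    intro t ht
    exact ⟨hIccsub (hJIcc t ht), Metric.ball_subset_closedBall (hJfacts t ht).1⟩
  have hαC1 : ContDiffOn ℝ 1 α J := by
    rw [show (1 : WithTop ℕ∞) = 0 + 1 by norm_num,
      contDiffOn_succ_iff_deriv_of_isOpen isOpen_Ioo]
    refine ⟨fun t ht => (hαt t ht).differentiableAt.differentiableWithinAt, by simp, ?_⟩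
    rw [contDiffOn_zero]
    exact ContinuousOn.congr hFFα hderivα
  have hxxC1 : ContDiffOn ℝ 1 xx J := contDiff_fst.comp_contDiffOn hαC1
  have hcurveC1 : ContDiffOn ℝ 1
      (fun s => ((s, (α s).1, (α s).2) : ℝ × (Fin nx → ℝ) × (Fin ny → ℝ))) J :=
    contDiffOn_id.prodMk ((contDiff_fst.comp_contDiffOn hαC1).prodMk
      (contDiff_snd.comp_contDiffOn hαC1))
  have hφαC1 : ContDiffOn ℝ 1 φα J :=
    hφC1U.comp hcurveC1 (fun t ht => hatU t ht)
  have hyyC1 : ContDiffOn ℝ 1 yy J :=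
    (contDiff_snd.comp_contDiffOn hαC1).add (Q.contDiff.comp_contDiffOn hφαC1)
  -- derivatives of the components
  have hxx' : ∀ t ∈ J, HasDerivAt xx (f t (xx t) (yy t)) t := by
    intro t ht
    have h := (ContinuousLinearMap.fst ℝ (Fin nx → ℝ) (Fin ny → ℝ)).hasFDerivAt.comp_hasDerivAt
      t (hαt t ht)
    exact h
  have huu' : ∀ t ∈ J, HasDerivAt (fun s => (α s).2) (P (φα t)) t := by
    intro t ht
    have h := (ContinuousLinearMap.snd ℝ (Fin nx → ℝ) (Fin ny → ℝ)).hasFDerivAt.comp_hasDerivAt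
      t (hαt t ht)
    exact h
  -- initial values
  have hxx0 : xx t₀ = x₀ := congrArg Prod.fst hα0
  have huu0 : (α t₀).2 = u₀ := congrArg Prod.snd hα0
  have hxx0' : (α t₀).1 = x₀ := congrArg Prod.fst hα0
  have hφα0 : φα t₀ = v₀ := by
    show φ (t₀, (α t₀).1, (α t₀).2) = v₀
    rw [show ((t₀, (α t₀).1, (α t₀).2) : ℝ × (Fin nx → ℝ) × (Fin ny → ℝ)) = (t₀, x₀, u₀) by
      rw [hxx0', huu0]]
    exact hφa₀
  have hyy0 : yy t₀ = y₀ := by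
    show (α t₀).2 + Q (φ (t₀, (α t₀).1, (α t₀).2)) = y₀
    have : φ (t₀, (α t₀).1, (α t₀).2) = v₀ := hφα0
    rw [this, huu0, hy₀eq]
  -- the algebraic constraint holds along the solution
  have hgzero : ∀ t ∈ J, g t (xx t) (yy t) = 0 := by
    have hc' : ∀ t ∈ J, HasDerivAt (fun s => g s (xx s) (yy s)) 0 t := by
      intro t ht
      have hdG : DifferentiableAt ℝ
          (fun p : ℝ × (Fin nx → ℝ) × (Fin ny → ℝ) => g p.1 p.2.1 p.2.2)
          (t, xx t, yy t) := hgdiff _ (hatΩ t ht)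
      have hφα't : DifferentiableAt ℝ φα t :=
        (hφαC1.differentiableOn one_ne_zero).differentiableAt (isOpen_Ioo.mem_nhds ht)
      have hyy' : HasDerivAt yy (P (φα t) + Q (deriv φα t)) t := by
        refine HasDerivAt.add (huu' t ht) ?_
        exact Q.hasFDerivAt.comp_hasDerivAt t hφα't.hasDerivAt
      have hch := chain_rule_g g hdG (hxx' t ht) hyy'
      have hval : fderiv ℝ (fun p : ℝ × (Fin nx → ℝ) × (Fin ny → ℝ) => g p.1 p.2.1 p.2.2)
          (t, xx t, yy t) (1, f t (xx t) (yy t), P (φα t) + Q (deriv φα t)) = 0 := by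
        rw [split_apply]
        rw [← hAux_eq f g hdG, ← fderiv_y_eq g hdG]
        have htI : t ∈ I := (hatΩ t ht).1
        have hxD : xx t ∈ D₁ := (hatΩ t ht).2.1
        have hyD : yy t ∈ D₂ := (hatΩ t ht).2.2
        have hBQt := hBQ t htI (xx t) hxD (yy t) hyD
        have hsum : fderiv ℝ (fun y' => g t (xx t) y') (yy t) (P (φα t) + Q (deriv φα t))
            = fderiv ℝ (fun y' => g t (xx t) y') (yy t) (φα t) := by
          rw [map_add, hBQt, add_zero]
          conv_rhs => rw [← hPQsum (φα t), map_add, hBQt, add_zero]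
        rw [hsum]
        have hGz := hUzero _ (hatU t ht)
        have : gTilde f g Q t (xx t) ((α t).2) (φα t) = 0 := hGz
        rw [gTilde] at this
        exact this
      rw [hval] at hch
      exact hch
    have ht0val : g t₀ (xx t₀) (yy t₀) = 0 := by rw [hxx0, hyy0]; exact hcons
    have huniq := ODE_solution_unique_of_mem_Ioo
      (v := fun _ _ => (0 : Fin ny → ℝ)) (s := fun _ => (univ : Set (Fin ny → ℝ)))
      (K := 0) (fun _ _ => (LipschitzWith.const _).lipschitzOnWith)
      ht₀J (f := fun s => g s (xx s) (yy s)) (g := fun _ => (0 : Fin ny → ℝ))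
      (fun t ht => ⟨by simpa using hc' t ht, mem_univ _⟩)
      (fun t ht => ⟨hasDerivAt_const _ _, mem_univ _⟩)
      (by simpa using ht0val)
    intro t ht
    exact huniq ht
  refine ⟨J, xx, yy, ht₀J, fun t ht => (hatΩ t ht).1, isOpen_Ioo, ordConnected_Ioo,
    hxxC1, hyyC1, fun t ht => (hatΩ t ht).2.1, fun t ht => (hatΩ t ht).2.2,
    hxx', hgzero, hxx0, hyy0, ?_⟩
  -- local uniqueness
  intro J' x' y' hJ't₀ hJ'I hJ'open hJ'ord hx'C1 hy'C1 hx'D hy'D hx'deriv hgc hx'0 hy'0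
  set w' : ℝ → Fin ny → ℝ := deriv y' with hw'def
  have hy'd : ∀ t ∈ J', HasDerivAt y' (w' t) t := fun t ht =>
    ((hy'C1.differentiableOn one_ne_zero).differentiableAt (hJ'open.mem_nhds ht)).hasDerivAt
  have hw'cont : ContinuousOn w' J' := by
    have h := (contDiffOn_succ_iff_deriv_of_isOpen hJ'open).mp
      (by rw [show ((0 : WithTop ℕ∞) + 1) = 1 by norm_num]; exact hy'C1)
    exact contDiffOn_zero.mp h.2.2
  have hp'Ω : ∀ t ∈ J', ((t, x' t, y' t) : ℝ × (Fin nx → ℝ) × (Fin ny → ℝ)) ∈ I ×ˢ D₁ ×ˢ D₂ :=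
    fun t ht => ⟨hJ'I ht, hx'D t ht, hy'D t ht⟩
  have hhid : ∀ t ∈ J',
      hAux f g t (x' t) (y' t) + fderiv ℝ (fun y'' => g t (x' t) y'') (y' t) (w' t) = 0 := by
    intro t ht
    have hdG := hgdiff _ (hp'Ω t ht)
    have hch := chain_rule_g g hdG (hx'deriv t ht) (hy'd t ht)
    have hc0 : HasDerivAt (fun s => g s (x' s) (y' s)) 0 t := by
      refine (hasDerivAt_const t (0 : Fin ny → ℝ)).congr_of_eventuallyEq ?_
      filter_upwards [hJ'open.mem_nhds ht] with s hs
      exact hgc s hs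
    have huniq := hch.unique hc0
    rw [split_apply, ← hAux_eq f g hdG, ← fderiv_y_eq g hdG] at huniq
    exact huniq
  have hw'₀P : P (w' t₀) = P w₀ := by
    have h1 := hhid t₀ hJ't₀
    rw [hx'0, hy'0] at h1
    have e1 : fderiv ℝ (fun y'' => g t₀ x₀ y'') y₀ (w' t₀)
        = fderiv ℝ (fun y'' => g t₀ x₀ y'') y₀ w₀ :=
      add_left_cancel (h1.trans hw₀.symm)
    have hsub : fderiv ℝ (fun y'' => g t₀ x₀ y'') y₀ (w' t₀ - w₀) = 0 := by
      rw [map_sub, e1, sub_self]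
    have hker₀ := hker t₀ ht₀ x₀ hx₀ y₀ hy₀
    have hmem : w' t₀ - w₀ ∈ K := by
      rw [← hker₀]
      exact LinearMap.mem_ker.mpr hsub
    rw [← hQrange] at hmem
    obtain ⟨z, hz⟩ := hmem
    have hz0 : P (w' t₀ - w₀) = 0 := by rw [← hz]; exact hPQ z
    rw [map_sub, sub_eq_zero] at hz0
    exact hz0
  set q' : ℝ → (ℝ × (Fin nx → ℝ) × (Fin ny → ℝ)) × (Fin ny → ℝ) :=
    fun t => ((t, x' t, P (y' t)), P (w' t) + Q (y' t)) with hq'def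
  have hq't₀ : q' t₀ = q₀ := by
    show ((t₀, x' t₀, P (y' t₀)), P (w' t₀) + Q (y' t₀)) = ((t₀, x₀, u₀), v₀)
    rw [hx'0, hy'0, hw'₀P, ← hu₀, ← hv₀]
  have hGGq' : ∀ t ∈ J', GG (q' t) = 0 := by
    intro t ht
    show gTilde f g Q t (x' t) (P (y' t)) (P (w' t) + Q (y' t)) = 0
    have hyrec : P (y' t) + Q (P (w' t) + Q (y' t)) = y' t := by
      rw [map_add, hQP, zero_add, hQQ, hPQsum]
    rw [gTilde, hyrec, map_add,
      hBQ t (hJ'I ht) (x' t) (hx'D t ht) (y' t) (hy'D t ht), add_zero,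
      hBP t (hJ'I ht) (x' t) (hx'D t ht) (y' t) (hy'D t ht)]
    exact hhid t ht
  -- continuity at t₀ and choice of a small interval
  have hx'ca : ContinuousAt x' t₀ :=
    (hx'C1.continuousOn t₀ hJ't₀).continuousAt (hJ'open.mem_nhds hJ't₀)
  have hy'ca : ContinuousAt y' t₀ :=
    (hy'C1.continuousOn t₀ hJ't₀).continuousAt (hJ'open.mem_nhds hJ't₀)
  have hw'ca : ContinuousAt w' t₀ :=
    (hw'cont t₀ hJ't₀).continuousAt (hJ'open.mem_nhds hJ't₀)
  have hq'ca : ContinuousAt q' t₀ := by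
    refine ContinuousAt.prodMk ?_ ?_
    · exact continuousAt_id.prodMk (hx'ca.prodMk (P.continuous.continuousAt.comp hy'ca))
    · exact (P.continuous.continuousAt.comp hw'ca).add (Q.continuous.continuousAt.comp hy'ca)
  have hV' : {t : ℝ | q' t ∈ V₀} ∈ nhds t₀ := by
    apply hq'ca.preimage_mem_nhds
    rw [hq't₀]
    exact hV₀nhds
  have hβca : ContinuousAt (fun s => ((x' s, P (y' s)) : (Fin nx → ℝ) × (Fin ny → ℝ))) t₀ :=
    hx'ca.prodMk (P.continuous.continuousAt.comp hy'ca)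
  have hβball : {t : ℝ | ((x' t, P (y' t)) : (Fin nx → ℝ) × (Fin ny → ℝ))
      ∈ Metric.ball z₀ R} ∈ nhds t₀ := by
    apply hβca.preimage_mem_nhds
    apply Metric.isOpen_ball.mem_nhds
    have : ((x' t₀, P (y' t₀)) : (Fin nx → ℝ) × (Fin ny → ℝ)) = z₀ := by
      rw [hx'0, hy'0, ← hu₀]
    rw [this]
    exact Metric.mem_ball_self hR
  obtain ⟨r₂, hr₂pos, hr₂sub⟩ := Metric.mem_nhds_iff.mp
    (Filter.inter_mem (Filter.inter_mem (Filter.inter_mem hV' hβball)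
      (hJ'open.mem_nhds hJ't₀)) (isOpen_Ioo.mem_nhds ht₀J))
  have hJcsub : ∀ t ∈ Ioo (t₀ - r₂) (t₀ + r₂),
      q' t ∈ V₀ ∧ ((x' t, P (y' t)) : (Fin nx → ℝ) × (Fin ny → ℝ)) ∈ Metric.ball z₀ R
        ∧ t ∈ J' ∧ t ∈ J := by
    intro t ht
    have : t ∈ Metric.ball t₀ r₂ := by rw [Real.ball_eq_Ioo]; exact ht
    have h := hr₂sub this
    exact ⟨h.1.1.1, h.1.1.2, h.1.2, h.2⟩
  have ht₀Jc : t₀ ∈ Ioo (t₀ - r₂) (t₀ + r₂) := ⟨by linarith, by linarith⟩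
  -- both (x', Py') and α solve the reduced ODE on the small interval
  set sset : ℝ → Set ((Fin nx → ℝ) × (Fin ny → ℝ)) :=
    fun t => if t ∈ Icc (t₀ - R) (t₀ + R) then Metric.closedBall z₀ R else ∅ with hssetdef
  have hLcs : ∀ t, LipschitzOnWith Lc (FF t) (sset t) := by
    intro t
    by_cases h : t ∈ Icc (t₀ - R) (t₀ + R)
    · rw [hssetdef]; simp only [if_pos h]; exact hFlip t h
    · rw [hssetdef]; simp only [if_neg h]; exact lipschitzOnWith_empty _ _
  have hIccR : ∀ t ∈ Ioo (t₀ - r₂) (t₀ + r₂), t ∈ Icc (t₀ - R) (t₀ + R) :=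
    fun t ht => hIccsub (hJIcc t (hJcsub t ht).2.2.2)
  have hφeq : ∀ t ∈ Ioo (t₀ - r₂) (t₀ + r₂),
      φ ((t, x' t, P (y' t)) : ℝ × (Fin nx → ℝ) × (Fin ny → ℝ)) = P (w' t) + Q (y' t) :=
    fun t ht => (hV₀uniq (q' t) (hJcsub t ht).1 (hGGq' t (hJcsub t ht).2.2.1)).symm
  have hkeyβ : ∀ t ∈ Ioo (t₀ - r₂) (t₀ + r₂),
      HasDerivAt (fun s => ((x' s, P (y' s)) : (Fin nx → ℝ) × (Fin ny → ℝ)))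
        (FF t (x' t, P (y' t))) t
      ∧ ((x' t, P (y' t)) : (Fin nx → ℝ) × (Fin ny → ℝ)) ∈ sset t := by
    intro t ht
    have htJ' : t ∈ J' := (hJcsub t ht).2.2.1
    have hu'd : HasDerivAt (fun s => P (y' s)) (P (w' t)) t :=
      P.hasFDerivAt.comp_hasDerivAt t (hy'd t htJ')
    have hβd : HasDerivAt (fun s => ((x' s, P (y' s)) : (Fin nx → ℝ) × (Fin ny → ℝ)))
        (f t (x' t) (y' t), P (w' t)) t := (hx'deriv t htJ').prodMk hu'd
    have hyrecov : P (y' t) + Q (φ (t, x' t, P (y' t))) = y' t := by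
      rw [hφeq t ht, map_add, hQP, zero_add, hQQ, hPQsum]
    have hPφ : P (φ (t, x' t, P (y' t))) = P (w' t) := by
      rw [hφeq t ht, map_add, hPQ, add_zero, hPP]
    constructor
    · have hFFval : FF t ((x' t, P (y' t)) : (Fin nx → ℝ) × (Fin ny → ℝ))
          = (f t (x' t) (y' t), P (w' t)) := by
        show (f t (x' t) (P (y' t) + Q (φ (t, x' t, P (y' t)))), P (φ (t, x' t, P (y' t)))) = _
        rw [hyrecov, hPφ]
      rw [hFFval]
      exact hβd
    · rw [hssetdef]
      simp only [if_pos (hIccR t ht)]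
      exact Metric.ball_subset_closedBall (hJcsub t ht).2.1
  have hkeyα : ∀ t ∈ Ioo (t₀ - r₂) (t₀ + r₂),
      HasDerivAt α (FF t (α t)) t ∧ α t ∈ sset t := by
    intro t ht
    have htJ : t ∈ J := (hJcsub t ht).2.2.2
    refine ⟨hαt t htJ, ?_⟩
    rw [hssetdef]
    simp only [if_pos (hIccR t ht)]
    exact Metric.ball_subset_closedBall (hJfacts t htJ).1
  have heq0 : ((x' t₀, P (y' t₀)) : (Fin nx → ℝ) × (Fin ny → ℝ)) = α t₀ := by
    rw [hα0, hx'0, hy'0, ← hu₀]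
  have huniqODE := ODE_solution_unique_of_mem_Ioo (v := FF) (s := sset) (K := Lc)
    (fun t _ => hLcs t) ht₀Jc hkeyβ hkeyα heq0
  filter_upwards [isOpen_Ioo.mem_nhds ht₀Jc] with t ht
  have hβα : ((x' t, P (y' t)) : (Fin nx → ℝ) × (Fin ny → ℝ)) = α t := huniqODE ht
  have hx'eq : x' t = (α t).1 := congrArg Prod.fst hβα
  have hu'eq : P (y' t) = (α t).2 := congrArg Prod.snd hβα
  refine ⟨hx'eq, ?_⟩
  have htJ' : t ∈ J' := (hJcsub t ht).2.2.1
  have h1 : y' t = P (y' t) + Q (φ (t, x' t, P (y' t))) := by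
    have hyrecov : P (y' t) + Q (φ (t, x' t, P (y' t))) = y' t := by
      rw [hφeq t ht, map_add, hQP, zero_add, hQQ, hPQsum]
    exact hyrecov.symm
  show y' t = (α t).2 + Q (φ (t, (α t).1, (α t).2))
  conv_lhs => rw [h1]
  rw [hx'eq, hu'eq]
end
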